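/- arXiv:1004.1947 — 2 statements merged into one kernel-verified Lean document; each statement's English description precedes it below -/
import Mathlib

section
/- The set of finite branches that are not refutable in the tableau calculus T forms an abstract consistency class; consequently every unsatisfiable finite branch is refutable (completeness of the cut-free tableau calculus for STT). -/
/-- Simple types of STT: the type `o` of truth values is `base 0`, sorts are `base (α+1)`. -/
inductive Ty : Type
  | base : ℕ → Ty
  | arr : Ty → Ty → Ty
  deriving DecidableEq

abbrev Ty.o : Ty := Ty.base 0
abbrev Ty.sort (α : ℕ) : Ty := Ty.base (α + 1)

/-- Terms of STT: variables, negation, primitive equality at every type, application,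
lambda abstraction. -/
inductive Tm : Ty → Type
  | var : ℕ → (σ : Ty) → Tm σ
  | neg : Tm (Ty.arr Ty.o Ty.o)
  | eq : (σ : Ty) → Tm (Ty.arr σ (Ty.arr σ Ty.o))
  | app : ∀ {σ τ : Ty}, Tm (Ty.arr σ τ) → Tm σ → Tm τ
  | lam : ℕ → (σ : Ty) → ∀ {τ : Ty}, Tm τ → Tm (Ty.arr σ τ)

def Tm.Not (s : Tm Ty.o) : Tm Ty.o := Tm.app Tm.neg s
def Tm.Eqn {σ : Ty} (s t : Tm σ) : Tm Ty.o := Tm.app (Tm.app (Tm.eq σ) s) t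
def Tm.Diseq {σ : Ty} (s t : Tm σ) : Tm Ty.o := Tm.Not (Tm.Eqn s t)

/-- Argument lists (spines): `Args σ ρ` turns a head of type `σ` into a term of type `ρ`. -/
inductive Args : Ty → Ty → Type
  | nil : ∀ {ρ}, Args ρ ρ
  | cons : ∀ {σ τ ρ}, Tm σ → Args τ ρ → Args (Ty.arr σ τ) ρ

def applyArgs : ∀ {σ ρ : Ty}, Tm σ → Args σ ρ → Tm ρ
  | _, _, s, Args.nil => s
  | _, _, s, Args.cons t a => applyArgs (Tm.app s t) a

def nfArgs (f : (σ : Ty) → Tm σ → Tm σ) : ∀ {σ ρ : Ty}, Args σ ρ → Args σ ρ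
  | _, _, Args.nil => Args.nil
  | _, _, Args.cons t a => Args.cons (f _ t) (nfArgs f a)

/-- Pairs of equi-typed argument lists `s₁ … sₙ` and `t₁ … tₙ`. -/
inductive Args2 : Ty → Ty → Type
  | nil : ∀ {ρ}, Args2 ρ ρ
  | cons : ∀ {σ τ ρ}, Tm σ → Tm σ → Args2 τ ρ → Args2 (Ty.arr σ τ) ρ

def Args2.left : ∀ {σ ρ}, Args2 σ ρ → Args σ ρ
  | _, _, Args2.nil => Args.nil
  | _, _, Args2.cons s _ p => Args.cons s (Args2.left p)

def Args2.right : ∀ {σ ρ}, Args2 σ ρ → Args σ ρ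
  | _, _, Args2.nil => Args.nil
  | _, _, Args2.cons _ t p => Args.cons t (Args2.right p)

/-- The list of disequations `sᵢ ≠ tᵢ` of a pair of argument lists. -/
def Args2.diseqs : ∀ {σ ρ}, Args2 σ ρ → List (Tm Ty.o)
  | _, _, Args2.nil => []
  | _, _, Args2.cons s t p => Tm.Diseq s t :: Args2.diseqs p

/-- Atomic heads: names (variables and the logical constants). -/
inductive Atomic : ∀ {σ : Ty}, Tm σ → Prop
  | var : ∀ n σ, Atomic (Tm.var n σ)
  | neg : Atomic Tm.neg
  | eq : ∀ σ, Atomic (Tm.eq σ)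

/-- Update a substitution at the name `(x, σ0)`. -/
def updS (θ : ℕ → (σ : Ty) → Option (Tm σ)) (x : ℕ) (σ0 : Ty) (t : Tm σ0) :
    ℕ → (σ : Ty) → Option (Tm σ) := fun n σ =>
  if h : n = x ∧ σ = σ0 then some (h.2.symm ▸ t) else θ n σ

/-- A normalization operator with an accompanying substitution operation,
satisfying N1–N3 and S1–S4. -/
structure NormOp : Type where
  nf : ∀ {σ : Ty}, Tm σ → Tm σ
  sub : (ℕ → (σ : Ty) → Option (Tm σ)) → ∀ {σ : Ty}, Tm σ → Tm σ
  n1 : ∀ {σ : Ty} (s : Tm σ), nf (nf s) = nf s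
  n2 : ∀ {σ τ : Ty} (s : Tm (Ty.arr σ τ)) (t : Tm σ), nf (Tm.app (nf s) t) = nf (Tm.app s t)
  n3 : ∀ {σ : Ty} {β : ℕ} (h : Tm σ), Atomic h → ∀ a : Args σ (Ty.base β),
      nf (applyArgs h a) = applyArgs h (nfArgs (fun _ s => nf s) a)
  s1 : ∀ θ (n : ℕ) (σ : Ty), sub θ (Tm.var n σ) = (θ n σ).getD (Tm.var n σ)
  s1neg : ∀ θ, sub θ Tm.neg = Tm.neg
  s1eq : ∀ θ (σ : Ty), sub θ (Tm.eq σ) = Tm.eq σ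
  s2 : ∀ θ {σ τ : Ty} (s : Tm (Ty.arr σ τ)) (t : Tm σ),
      sub θ (Tm.app s t) = Tm.app (sub θ s) (sub θ t)
  s3 : ∀ θ (x : ℕ) (σ : Ty) {τ : Ty} (s : Tm τ) (t : Tm σ),
      nf (Tm.app (sub θ (Tm.lam x σ s)) t) = nf (sub (updS θ x σ t) s)
  s4 : ∀ {σ : Ty} (s : Tm σ), nf (sub (fun _ _ => none) s) = nf s

/-- The evidence conditions for a branch `E`. -/
structure Evident (Ω : NormOp) (E : Set (Tm Ty.o)) : Prop where
  dn : ∀ s : Tm Ty.o, Tm.Not (Tm.Not s) ∈ E → s ∈ E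
  bq : ∀ s t : Tm Ty.o, Tm.Eqn s t ∈ E → (s ∈ E ∧ t ∈ E) ∨ (Tm.Not s ∈ E ∧ Tm.Not t ∈ E)
  be : ∀ s t : Tm Ty.o, Tm.Diseq s t ∈ E → (s ∈ E ∧ Tm.Not t ∈ E) ∨ (Tm.Not s ∈ E ∧ t ∈ E)
  fq : ∀ {σ τ : Ty} (s t : Tm (Ty.arr σ τ)), Tm.Eqn s t ∈ E → ∀ u : Tm σ, Ω.nf u = u →
      Tm.Eqn (Ω.nf (Tm.app s u)) (Ω.nf (Tm.app t u)) ∈ E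
  fe : ∀ {σ τ : Ty} (s t : Tm (Ty.arr σ τ)), Tm.Diseq s t ∈ E →
      ∃ x : ℕ, Tm.Diseq (Ω.nf (Tm.app s (Tm.var x σ))) (Ω.nf (Tm.app t (Tm.var x σ))) ∈ E
  mat : ∀ {σ : Ty} (x : ℕ) (p : Args2 σ Ty.o),
      applyArgs (Tm.var x σ) p.left ∈ E → Tm.Not (applyArgs (Tm.var x σ) p.right) ∈ E →
      ∃ d ∈ p.diseqs, d ∈ E
  dec : ∀ {σ : Ty} {α : ℕ} (x : ℕ) (p : Args2 σ (Ty.sort α)),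
      Tm.Diseq (applyArgs (Tm.var x σ) p.left) (applyArgs (Tm.var x σ) p.right) ∈ E →
      ∃ d ∈ p.diseqs, d ∈ E
  con : ∀ {α : ℕ} (s t u v : Tm (Ty.sort α)), Tm.Eqn s t ∈ E → Tm.Diseq u v ∈ E →
      (Tm.Diseq s u ∈ E ∧ Tm.Diseq t u ∈ E) ∨ (Tm.Diseq s v ∈ E ∧ Tm.Diseq t v ∈ E)

/-- A term `u` is discriminating in `E` if it occurs on one side of a disequation in `E`. -/
def Discriminating (E : Set (Tm Ty.o)) {σ : Ty} (u : Tm σ) : Prop :=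
  ∃ t : Tm σ, Tm.Diseq u t ∈ E ∨ Tm.Diseq t u ∈ E

/-- An `α`-discriminant: a maximal set of `α`-discriminating terms no two of which are
related by a disequation in `E`. -/
def IsDiscriminant (E : Set (Tm Ty.o)) (α : ℕ) (a : Set (Tm (Ty.sort α))) : Prop :=
  (∀ u ∈ a, Discriminating E u) ∧
  (∀ s ∈ a, ∀ t ∈ a, Tm.Diseq s t ∉ E) ∧
  (∀ b : Set (Tm (Ty.sort α)), a ⊆ b → (∀ u ∈ b, Discriminating E u) →
    (∀ s ∈ b, ∀ t ∈ b, Tm.Diseq s t ∉ E) → b = a)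

/-- `s # t`: the disequation `s ≠ t` or `t ≠ s` belongs to `E`. -/
def hashE (E : Set (Tm Ty.o)) {σ : Ty} (s t : Tm σ) : Prop :=
  Tm.Diseq s t ∈ E ∨ Tm.Diseq t s ∈ E

/-- Compatibility of two terms relative to an evident branch, by induction on types. -/
def compat (Ω : NormOp) (E : Set (Tm Ty.o)) : (σ : Ty) → Tm σ → Tm σ → Prop
  | Ty.base 0 => fun s t =>
      ¬(Ω.nf s ∈ E ∧ Tm.Not (Ω.nf t) ∈ E) ∧ ¬(Tm.Not (Ω.nf s) ∈ E ∧ Ω.nf t ∈ E)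
  | Ty.base (α + 1) => fun s t => ¬ hashE E (Ω.nf s) (Ω.nf t)
  | Ty.arr σ τ => fun s t => ∀ u v : Tm σ, compat Ω E σ u v →
      compat Ω E τ (Tm.app s u) (Tm.app t v)

/-- `ExistsPairHashNf Ω E p` holds if `[sᵢ] # [tᵢ]` for some position `i` of `p`. -/
def ExistsPairHashNf (Ω : NormOp) (E : Set (Tm Ty.o)) : ∀ {σ ρ : Ty}, Args2 σ ρ → Prop
  | _, _, Args2.nil => False
  | _, _, Args2.cons s t p => hashE E (Ω.nf s) (Ω.nf t) ∨ ExistsPairHashNf Ω E p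

/-- The value system of an evident branch `E`: at `o` the values are booleans, at a sort the
values are `α`-discriminants, and at function types the logical-relation clause is used. -/
def sem (Ω : NormOp) (E : Set (Tm Ty.o)) : (σ : Ty) → (A : Type) × (Tm σ → A → Prop)
  | Ty.base 0 => ⟨Bool, fun s b => if b then Tm.Not (Ω.nf s) ∉ E else Ω.nf s ∉ E⟩
  | Ty.base (α + 1) => ⟨Set (Tm (Ty.sort α)), fun s a =>
      IsDiscriminant E α a ∧ (Discriminating E (Ω.nf s) → Ω.nf s ∈ a)⟩
  | Ty.arr σ τ =>
      ⟨{x : (sem Ω E σ).1 // ∃ t : Tm σ, (sem Ω E σ).2 t x} → (sem Ω E τ).1,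
       fun s f => ∀ (t : Tm σ) (x : (sem Ω E σ).1) (h : (sem Ω E σ).2 t x),
         (sem Ω E τ).2 (Tm.app s t) (f ⟨x, t, h⟩)⟩

/-- An applicative structure for STT: nonempty domains, `D(στ)` a set of functions
`D(σ) → D(τ)` (extensionality), `D(o) = {0,1}`, together with an assignment for the
variables and logical values for `¬` and `=_σ`. -/
structure Struc : Type 1 where
  D : Ty → Type
  ap : ∀ {σ τ : Ty}, D (Ty.arr σ τ) → D σ → D τ
  ext : ∀ {σ τ : Ty} (f g : D (Ty.arr σ τ)), (∀ a : D σ, ap f a = ap g a) → f = g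
  ne : ∀ σ : Ty, Nonempty (D σ)
  I : ℕ → ∀ σ : Ty, D σ
  bo : D Ty.o ≃ Bool
  negv : D (Ty.arr Ty.o Ty.o)
  eqv : ∀ σ : Ty, D (Ty.arr σ (Ty.arr σ Ty.o))
  hneg : ∀ b : D Ty.o, ap negv b = bo.symm (!(bo b))
  heq : ∀ {σ : Ty} (a b : D σ), ap (ap (eqv σ) a) b = bo.symm true ↔ a = b

/-- Update the assignment of a structure at the name `(m, σ0)`. -/
def updD (M : Struc) (I : ℕ → ∀ σ, M.D σ) (m : ℕ) (σ0 : Ty) (a : M.D σ0) :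
    ℕ → ∀ σ, M.D σ := fun n σ =>
  if h : n = m ∧ σ = σ0 then (h.2.symm ▸ a) else I n σ

/-- The evaluation relation of a logical structure. -/
inductive Eval (M : Struc) : (ℕ → ∀ σ, M.D σ) → ∀ σ : Ty, Tm σ → M.D σ → Prop
  | var : ∀ (I : ℕ → ∀ σ, M.D σ) (n : ℕ) (σ : Ty), Eval M I σ (Tm.var n σ) (I n σ)
  | neg : ∀ I : ℕ → ∀ σ, M.D σ, Eval M I (Ty.arr Ty.o Ty.o) Tm.neg M.negv
  | eq : ∀ (I : ℕ → ∀ σ, M.D σ) (σ : Ty), Eval M I (Ty.arr σ (Ty.arr σ Ty.o)) (Tm.eq σ) (M.eqv σ)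
  | app : ∀ {I : ℕ → ∀ σ, M.D σ} {σ τ : Ty} {s : Tm (Ty.arr σ τ)} {t : Tm σ}
      {f : M.D (Ty.arr σ τ)} {a : M.D σ},
      Eval M I (Ty.arr σ τ) s f → Eval M I σ t a → Eval M I τ (Tm.app s t) (M.ap f a)
  | lam : ∀ {I : ℕ → ∀ σ, M.D σ} (n : ℕ) (σ : Ty) {τ : Ty} (s : Tm τ) (f : M.D (Ty.arr σ τ)),
      (∀ a : M.D σ, Eval M (updD M I n σ a) τ s (M.ap f a)) →
      Eval M I (Ty.arr σ τ) (Tm.lam n σ s) f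

/-- A logical interpretation: a logical structure whose evaluation is total. -/
structure Interp : Type 1 extends Struc where
  total : ∀ (σ : Ty) (s : Tm σ), ∃ a : toStruc.D σ, Eval toStruc toStruc.I σ s a

/-- `M` is a model of the set of formulas `E`. -/
def Satisfies (M : Interp) (E : Set (Tm Ty.o)) : Prop :=
  ∀ s ∈ E, Eval M.toStruc M.I Ty.o s (M.bo.symm true)

/-- A surjective interpretation: every value is denoted by some term. -/
def Surj (M : Interp) : Prop :=
  ∀ (σ : Ty) (a : M.D σ), ∃ s : Tm σ, Eval M.toStruc M.I σ s a

/-- A complete branch: contains `s` or `¬s` for every normal formula `s`. -/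
def CompleteBranch (Ω : NormOp) (E : Set (Tm Ty.o)) : Prop :=
  ∀ s : Tm Ty.o, Ω.nf s = s → s ∈ E ∨ Tm.Not s ∈ E

/-- The abstract consistency conditions on a set of branches `Γ`. -/
structure ACC (Ω : NormOp) (Γ : Set (Set (Tm Ty.o))) : Prop where
  dn : ∀ A ∈ Γ, ∀ s : Tm Ty.o, Tm.Not (Tm.Not s) ∈ A → insert s A ∈ Γ
  bq : ∀ A ∈ Γ, ∀ s t : Tm Ty.o, Tm.Eqn s t ∈ A →
      insert s (insert t A) ∈ Γ ∨ insert (Tm.Not s) (insert (Tm.Not t) A) ∈ Γ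
  be : ∀ A ∈ Γ, ∀ s t : Tm Ty.o, Tm.Diseq s t ∈ A →
      insert s (insert (Tm.Not t) A) ∈ Γ ∨ insert (Tm.Not s) (insert t A) ∈ Γ
  fq : ∀ A ∈ Γ, ∀ {σ τ : Ty} (s t : Tm (Ty.arr σ τ)), Tm.Eqn s t ∈ A → ∀ u : Tm σ, Ω.nf u = u →
      insert (Tm.Eqn (Ω.nf (Tm.app s u)) (Ω.nf (Tm.app t u))) A ∈ Γ
  fe : ∀ A ∈ Γ, ∀ {σ τ : Ty} (s t : Tm (Ty.arr σ τ)), Tm.Diseq s t ∈ A →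
      ∃ x : ℕ, insert (Tm.Diseq (Ω.nf (Tm.app s (Tm.var x σ))) (Ω.nf (Tm.app t (Tm.var x σ)))) A ∈ Γ
  mat : ∀ A ∈ Γ, ∀ {σ : Ty} (x : ℕ) (p : Args2 σ Ty.o),
      applyArgs (Tm.var x σ) p.left ∈ A → Tm.Not (applyArgs (Tm.var x σ) p.right) ∈ A →
      ∃ d ∈ p.diseqs, insert d A ∈ Γ
  dec : ∀ A ∈ Γ, ∀ {σ : Ty} {α : ℕ} (x : ℕ) (p : Args2 σ (Ty.sort α)),
      Tm.Diseq (applyArgs (Tm.var x σ) p.left) (applyArgs (Tm.var x σ) p.right) ∈ A →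
      ∃ d ∈ p.diseqs, insert d A ∈ Γ
  con : ∀ A ∈ Γ, ∀ {α : ℕ} (s t u v : Tm (Ty.sort α)), Tm.Eqn s t ∈ A → Tm.Diseq u v ∈ A →
      insert (Tm.Diseq s u) (insert (Tm.Diseq t u) A) ∈ Γ ∨
      insert (Tm.Diseq s v) (insert (Tm.Diseq t v) A) ∈ Γ

/-- A complete abstract consistency class. -/
def CompleteACC (Ω : NormOp) (Γ : Set (Set (Tm Ty.o))) : Prop :=
  ∀ A ∈ Γ, ∀ s : Tm Ty.o, Ω.nf s = s → insert s A ∈ Γ ∨ insert (Tm.Not s) A ∈ Γ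

/-- Free occurrence of the name `(x, μ)` in a term. -/
def FreeIn (x : ℕ) (μ : Ty) : ∀ {σ : Ty}, Tm σ → Prop
  | _, Tm.var n σ => x = n ∧ μ = σ
  | _, Tm.app s t => FreeIn x μ s ∨ FreeIn x μ t
  | _, Tm.lam n σ s => ¬(x = n ∧ μ = σ) ∧ FreeIn x μ s
  | _, _ => False

/-- A closed branch: contains `x` and `¬x` for a variable `x : o`, or `x ≠ x` at a sort. -/
def ClosedB (A : Set (Tm Ty.o)) : Prop :=
  (∃ x : ℕ, Tm.var x Ty.o ∈ A ∧ Tm.Not (Tm.var x Ty.o) ∈ A) ∨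
  (∃ (α : ℕ) (x : ℕ), Tm.Diseq (Tm.var x (Ty.sort α)) (Tm.var x (Ty.sort α)) ∈ A)

/-- Refutability in the cut-free tableau calculus `T` for STT, with the restrictions that
rules are applied only to non-closed branches and functional extensionality is applied only
once per disequation. -/
inductive Refutable (Ω : NormOp) : Set (Tm Ty.o) → Prop
  | closed : ∀ {A : Set (Tm Ty.o)}, ClosedB A → Refutable Ω A
  | dn : ∀ {A : Set (Tm Ty.o)} {s : Tm Ty.o}, ¬ClosedB A → Tm.Not (Tm.Not s) ∈ A →
      Refutable Ω (insert s A) → Refutable Ω A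
  | bq : ∀ {A : Set (Tm Ty.o)} (s t : Tm Ty.o), ¬ClosedB A → Tm.Eqn s t ∈ A →
      Refutable Ω (insert s (insert t A)) →
      Refutable Ω (insert (Tm.Not s) (insert (Tm.Not t) A)) → Refutable Ω A
  | be : ∀ {A : Set (Tm Ty.o)} (s t : Tm Ty.o), ¬ClosedB A → Tm.Diseq s t ∈ A →
      Refutable Ω (insert s (insert (Tm.Not t) A)) →
      Refutable Ω (insert (Tm.Not s) (insert t A)) → Refutable Ω A
  | fq : ∀ {A : Set (Tm Ty.o)} {σ τ : Ty} (s t : Tm (Ty.arr σ τ)) (u : Tm σ), ¬ClosedB A →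
      Tm.Eqn s t ∈ A → Ω.nf u = u →
      Refutable Ω (insert (Tm.Eqn (Ω.nf (Tm.app s u)) (Ω.nf (Tm.app t u))) A) → Refutable Ω A
  | fe : ∀ {A : Set (Tm Ty.o)} {σ τ : Ty} (s t : Tm (Ty.arr σ τ)) (x : ℕ), ¬ClosedB A →
      Tm.Diseq s t ∈ A → (∀ u ∈ A, ¬ FreeIn x σ u) →
      (¬∃ y : ℕ, Tm.Diseq (Ω.nf (Tm.app s (Tm.var y σ))) (Ω.nf (Tm.app t (Tm.var y σ))) ∈ A) →
      Refutable Ω (insert (Tm.Diseq (Ω.nf (Tm.app s (Tm.var x σ))) (Ω.nf (Tm.app t (Tm.var x σ)))) A) →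
      Refutable Ω A
  | mat : ∀ {A : Set (Tm Ty.o)} {σ : Ty} (x : ℕ) (p : Args2 σ Ty.o), ¬ClosedB A →
      applyArgs (Tm.var x σ) p.left ∈ A → Tm.Not (applyArgs (Tm.var x σ) p.right) ∈ A →
      (∀ d ∈ p.diseqs, Refutable Ω (insert d A)) → Refutable Ω A
  | dec : ∀ {A : Set (Tm Ty.o)} {σ : Ty} {α : ℕ} (x : ℕ) (p : Args2 σ (Ty.sort α)), ¬ClosedB A →
      Tm.Diseq (applyArgs (Tm.var x σ) p.left) (applyArgs (Tm.var x σ) p.right) ∈ A →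
      (∀ d ∈ p.diseqs, Refutable Ω (insert d A)) → Refutable Ω A
  | con : ∀ {A : Set (Tm Ty.o)} {α : ℕ} (s t u v : Tm (Ty.sort α)), ¬ClosedB A →
      Tm.Eqn s t ∈ A → Tm.Diseq u v ∈ A →
      Refutable Ω (insert (Tm.Diseq s u) (insert (Tm.Diseq t u) A)) →
      Refutable Ω (insert (Tm.Diseq s v) (insert (Tm.Diseq t v) A)) → Refutable Ω A


/-! ### Auxiliary development -/

section Aux

open Tm

/-- Size of a type. -/
def tySize : Ty → ℕ
  | .base _ => 1
  | .arr s t => tySize s + tySize t + 1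

lemma tySize_pos : ∀ σ, 0 < tySize σ
  | .base _ => Nat.succ_pos _
  | .arr _ _ => Nat.succ_pos _

lemma args_size_le : ∀ {σ ρ : Ty} (_ : Args σ ρ), tySize ρ ≤ tySize σ
  | _, _, .nil => le_refl _
  | _, _, @Args.cons σ τ ρ _ a =>
    le_trans (args_size_le a) (by simp [tySize]; omega)

lemma args_self_nil {σ : Ty} (a : Args σ σ) : a = Args.nil := by
  cases a with
  | nil => rfl
  | cons t a' =>
    exfalso
    have := args_size_le a'
    simp [tySize] at this


/-- Append of argument lists. -/
def Args.append : ∀ {σ μ ρ : Ty}, Args σ μ → Args μ ρ → Args σ ρ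
  | _, _, _, .nil, b => b
  | _, _, _, .cons t a, b => .cons t (a.append b)

@[simp] lemma Args.append_nil : ∀ {σ μ : Ty} (a : Args σ μ), a.append Args.nil = a
  | _, _, .nil => rfl
  | _, _, .cons t a => by rw [Args.append, Args.append_nil]

/-- Snoc. -/
def Args.snoc : ∀ {σ μ ρ : Ty}, Args σ (Ty.arr μ ρ) → Tm μ → Args σ ρ
  | _, _, _, .nil, u => .cons u .nil
  | _, _, _, .cons t a, u => .cons t (a.snoc u)

lemma Args.snoc_append : ∀ {σ μ ρ ρ' : Ty} (a : Args σ (Ty.arr μ ρ)) (u : Tm μ) (b : Args ρ ρ'),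
    (a.snoc u).append b = a.append (Args.cons u b)
  | _, _, _, _, .nil, u, b => rfl
  | _, _, _, _, .cons t a, u, b => by
    show Args.cons t ((a.snoc u).append b) = Args.cons t (a.append (Args.cons u b))
    rw [Args.snoc_append]

lemma applyArgs_append : ∀ {σ μ ρ : Ty} (a : Args σ μ) (b : Args μ ρ) (h : Tm σ),
    applyArgs h (a.append b) = applyArgs (applyArgs h a) b
  | _, _, _, .nil, b, h => rfl
  | _, _, _, .cons t a, b, h => by
    show applyArgs (Tm.app h t) (a.append b) = _
    rw [applyArgs_append]
    rfl

lemma applyArgs_snoc : ∀ {σ μ ρ : Ty} (a : Args σ (Ty.arr μ ρ)) (u : Tm μ) (h : Tm σ),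
    applyArgs h (a.snoc u) = Tm.app (applyArgs h a) u
  | _, _, _, .nil, u, h => rfl
  | _, _, _, .cons t a, u, h => by
    show applyArgs (Tm.app h t) (a.snoc u) = _
    rw [applyArgs_snoc]
    rfl

/-- Non-application terms (possible spine heads). -/
def notApp : ∀ {σ : Ty}, Tm σ → Prop
  | _, .app _ _ => False
  | _, _ => True

lemma Atomic.notApp : ∀ {σ : Ty} {h : Tm σ}, Atomic h → notApp h
  | _, _, .var _ _ => trivial
  | _, _, .neg => trivial
  | _, _, .eq _ => trivial
@[simp] lemma notApp_var (n : ℕ) (σ : Ty) : notApp (Tm.var n σ) := trivial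
@[simp] lemma notApp_neg : notApp Tm.neg := trivial
@[simp] lemma notApp_eq (σ : Ty) : notApp (Tm.eq σ) := trivial


/-- Head-spine decomposition. -/
def decomp : ∀ {ρ : Ty}, Tm ρ → Σ σ : Ty, Tm σ × Args σ ρ
  | _, .app f u =>
    let d := decomp f
    ⟨d.1, (d.2.1, d.2.2.snoc u)⟩
  | _, .var n σ => ⟨_, (.var n σ, .nil)⟩
  | _, .neg => ⟨_, (.neg, .nil)⟩
  | _, .eq σ => ⟨_, (.eq σ, .nil)⟩
  | _, .lam n σ s => ⟨_, (.lam n σ s, .nil)⟩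

lemma decomp_notApp : ∀ {σ : Ty} (h : Tm σ), notApp h → decomp h = ⟨σ, (h, Args.nil)⟩
  | _, .var n σ, _ => rfl
  | _, .neg, _ => rfl
  | _, .eq σ, _ => rfl
  | _, .lam n σ s, _ => rfl

lemma decomp_applyArgs : ∀ {σ ρ : Ty} (a : Args σ ρ) (w : Tm σ),
    decomp (applyArgs w a) = ⟨(decomp w).1, ((decomp w).2.1, (decomp w).2.2.append a)⟩
  | _, _, .nil, w => by simp [applyArgs]
  | _, _, .cons t a, w => by
    show decomp (applyArgs (Tm.app w t) a) = _
    rw [decomp_applyArgs a (Tm.app w t)]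
    show (⟨(decomp w).1, ((decomp w).2.1, ((decomp w).2.2.snoc t).append a)⟩ :
      Σ σ : Ty, Tm σ × Args σ _) = _
    rw [Args.snoc_append]

lemma spine_unique {σ₁ σ₂ ρ : Ty} (h₁ : Tm σ₁) (h₂ : Tm σ₂) (a₁ : Args σ₁ ρ) (a₂ : Args σ₂ ρ)
    (n₁ : notApp h₁) (n₂ : notApp h₂) (e : applyArgs h₁ a₁ = applyArgs h₂ a₂) :
    σ₁ = σ₂ ∧ HEq h₁ h₂ ∧ HEq a₁ a₂ := by
  have d₁ := decomp_applyArgs a₁ h₁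
  have d₂ := decomp_applyArgs a₂ h₂
  rw [decomp_notApp h₁ n₁] at d₁
  rw [decomp_notApp h₂ n₂] at d₂
  simp only [Args.append] at d₁ d₂
  rw [e, d₂] at d₁
  obtain ⟨hty, hrest⟩ := Sigma.mk.inj_iff.mp d₁.symm
  subst hty
  have := eq_of_heq hrest
  exact ⟨rfl, heq_of_eq (congrArg Prod.fst this), heq_of_eq (congrArg Prod.snd this)⟩

lemma spine_unique_var {σ₁ σ₂ ρ : Ty} (x₁ x₂ : ℕ) (a₁ : Args σ₁ ρ) (a₂ : Args σ₂ ρ)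
    (e : applyArgs (Tm.var x₁ σ₁) a₁ = applyArgs (Tm.var x₂ σ₂) a₂) :
    σ₁ = σ₂ ∧ x₁ = x₂ ∧ HEq a₁ a₂ := by
  obtain ⟨hty, hh, ha⟩ := spine_unique _ _ _ _ (notApp_var _ _) (notApp_var _ _) e
  subst hty
  have := eq_of_heq hh
  injection this with h1 h2
  exact ⟨rfl, h1, ha⟩

@[simp] lemma args_cons_inj {σ τ ρ : Ty} {t t' : Tm σ} {a a' : Args τ ρ} :
    Args.cons t a = Args.cons t' a' ↔ t = t' ∧ a = a' := by
  constructor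
  · intro h
    cases h
    exact ⟨rfl, rfl⟩
  · rintro ⟨rfl, rfl⟩; rfl

lemma Eqn_notation {σ : Ty} (s t : Tm σ) :
    Tm.Eqn s t = applyArgs (Tm.eq σ) (Args.cons s (Args.cons t Args.nil)) := rfl

lemma Not_notation (s : Tm Ty.o) :
    Tm.Not s = applyArgs Tm.neg (Args.cons s Args.nil) := rfl

lemma Not_inj {s t : Tm Ty.o} (h : Tm.Not s = Tm.Not t) : s = t := by
  injection h

lemma Eqn_inj {σ σ' : Ty} {s t : Tm σ} {s' t' : Tm σ'}
    (h : Tm.Eqn s t = Tm.Eqn s' t') : σ = σ' ∧ HEq s s' ∧ HEq t t' := by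
  rw [Eqn_notation, Eqn_notation] at h
  obtain ⟨hty, hh, ha⟩ := spine_unique _ _ _ _ (notApp_eq _) (notApp_eq _) h
  have hty' : σ = σ' := by
    injection hty with h1 h2
  subst hty'
  have := eq_of_heq ha
  rw [args_cons_inj] at this
  obtain ⟨h1, h2⟩ := this
  rw [args_cons_inj] at h2
  exact ⟨rfl, heq_of_eq h1, heq_of_eq h2.1⟩

lemma Eqn_inj' {σ : Ty} {s t s' t' : Tm σ}
    (h : Tm.Eqn s t = Tm.Eqn s' t') : s = s' ∧ t = t' := by
  obtain ⟨_, h1, h2⟩ := Eqn_inj h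
  exact ⟨eq_of_heq h1, eq_of_heq h2⟩

lemma Diseq_inj {σ σ' : Ty} {s t : Tm σ} {s' t' : Tm σ'}
    (h : Tm.Diseq s t = Tm.Diseq s' t') : σ = σ' ∧ HEq s s' ∧ HEq t t' :=
  Eqn_inj (Not_inj h)

lemma Not_ne_Eqn {σ : Ty} {s : Tm Ty.o} {u v : Tm σ} : Tm.Not s ≠ Tm.Eqn u v := by
  intro h
  rw [Not_notation, Eqn_notation] at h
  obtain ⟨hty, hh, ha⟩ := spine_unique _ _ _ _ (notApp_neg) (notApp_eq _) h
  injection hty with h1 h2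
  subst h1
  exact Ty.noConfusion h2

end Aux

section NormFacts

variable (Ω : NormOp)

/-- Normalization of a single-argument spine. -/
abbrev nfA (a : Args σ ρ) : Args σ ρ := nfArgs (fun _ s => Ω.nf s) a

lemma nf_Not (s : Tm Ty.o) : Ω.nf (Tm.Not s) = Tm.Not (Ω.nf s) :=
  Ω.n3 (β := 0) Tm.neg Atomic.neg (Args.cons s Args.nil)

lemma nf_Eqn {σ : Ty} (s t : Tm σ) : Ω.nf (Tm.Eqn s t) = Tm.Eqn (Ω.nf s) (Ω.nf t) :=
  Ω.n3 (β := 0) (Tm.eq σ) (Atomic.eq σ) (Args.cons s (Args.cons t Args.nil))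

lemma nf_Diseq {σ : Ty} (s t : Tm σ) :
    Ω.nf (Tm.Diseq s t) = Tm.Diseq (Ω.nf s) (Ω.nf t) := by
  rw [Tm.Diseq, nf_Not, nf_Eqn]; rfl

lemma nf_var_base (n β : ℕ) : Ω.nf (Tm.var n (Ty.base β)) = Tm.var n (Ty.base β) :=
  Ω.n3 (Tm.var n (Ty.base β)) (Atomic.var n _) Args.nil

lemma nf_var_o (n : ℕ) : Ω.nf (Tm.var n Ty.o) = Tm.var n Ty.o := nf_var_base Ω n 0

lemma nf_applyArgs_var {σ : Ty} {β : ℕ} (x : ℕ) (a : Args σ (Ty.base β)) :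
    Ω.nf (applyArgs (Tm.var x σ) a) = applyArgs (Tm.var x σ) (nfA Ω a) :=
  Ω.n3 (Tm.var x σ) (Atomic.var x σ) a

lemma normal_Not {s : Tm Ty.o} (h : Ω.nf (Tm.Not s) = Tm.Not s) : Ω.nf s = s := by
  rw [nf_Not] at h; exact Not_inj h

lemma normal_Eqn {σ : Ty} {s t : Tm σ} (h : Ω.nf (Tm.Eqn s t) = Tm.Eqn s t) :
    Ω.nf s = s ∧ Ω.nf t = t := by
  rw [nf_Eqn] at h; exact Eqn_inj' h

lemma normal_Diseq {σ : Ty} {s t : Tm σ} (h : Ω.nf (Tm.Diseq s t) = Tm.Diseq s t) :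
    Ω.nf s = s ∧ Ω.nf t = t := by
  rw [nf_Diseq] at h
  exact Eqn_inj' (Not_inj h)

lemma nf_nf {σ : Ty} (s : Tm σ) : Ω.nf (Ω.nf s) = Ω.nf s := Ω.n1 s

lemma nfA_nfA {σ ρ : Ty} (a : Args σ ρ) : nfA Ω (nfA Ω a) = nfA Ω a := by
  induction a with
  | nil => rfl
  | cons t a ih =>
    show Args.cons (Ω.nf (Ω.nf t)) (nfA Ω (nfA Ω a)) = nfA Ω (Args.cons t a)
    rw [Ω.n1, ih]
    rfl

lemma nf_app_congr {σ τ : Ty} {s s' : Tm (Ty.arr σ τ)} (h : Ω.nf s = Ω.nf s') (t : Tm σ) :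
    Ω.nf (Tm.app s t) = Ω.nf (Tm.app s' t) := by
  rw [← Ω.n2 s t, h, Ω.n2]

lemma nf_applyArgs_congr {σ ρ : Ty} (a : Args σ ρ) {w w' : Tm σ} (h : Ω.nf w = Ω.nf w') :
    Ω.nf (applyArgs w a) = Ω.nf (applyArgs w' a) := by
  induction a with
  | nil => exact h
  | cons t a ih => exact ih (nf_app_congr Ω h t)

lemma normal_applyArgs_var {σ : Ty} {β : ℕ} {x : ℕ} {a : Args σ (Ty.base β)}
    (h : Ω.nf (applyArgs (Tm.var x σ) a) = applyArgs (Tm.var x σ) a) : nfA Ω a = a := by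
  rw [nf_applyArgs_var] at h
  obtain ⟨-, -, ha⟩ := spine_unique_var _ _ _ _ h
  exact eq_of_heq ha

/-- The Tait-style reducibility predicate used to derive head-normal forms. -/
def GoodT : ∀ σ : Ty, Tm σ → Prop
  | .base β => fun t => ∃ (σ' : Ty) (h : Tm σ') (a : Args σ' (Ty.base β)),
      Atomic h ∧ Ω.nf t = applyArgs h (nfA Ω a)
  | .arr σ τ => fun t => ∀ u : Tm σ, GoodT σ u → GoodT τ (Tm.app t u)

lemma goodT_congr : ∀ (σ : Ty) {t t' : Tm σ}, Ω.nf t = Ω.nf t' → GoodT Ω σ t → GoodT Ω σ t'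
  | .base β, t, t', h, ⟨σ', hd, a, hat, he⟩ => ⟨σ', hd, a, hat, h ▸ he⟩
  | .arr σ τ, t, t', h, g => fun u gu =>
      goodT_congr τ (nf_app_congr Ω h u) (g u gu)

lemma goodT_spine : ∀ (ρ : Ty) {σ : Ty} (h : Tm σ) (a : Args σ ρ),
    Atomic h → GoodT Ω ρ (applyArgs h a)
  | .base β, _, h, a, hat => ⟨_, h, a, hat, by
      rw [Ω.n3 h hat a]⟩
  | .arr ρ₁ ρ₂, _, h, a, hat => fun u _ => by
      have := goodT_spine ρ₂ h (a.snoc u) hat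
      rwa [applyArgs_snoc] at this

lemma goodT_atomic {σ : Ty} (h : Tm σ) (hat : Atomic h) : GoodT Ω σ h := by
  have := goodT_spine Ω σ h Args.nil hat
  exact this

lemma goodT_fundamental : ∀ {σ : Ty} (s : Tm σ) (θ : ℕ → (σ : Ty) → Option (Tm σ)),
    (∀ (n : ℕ) (μ : Ty), GoodT Ω μ ((θ n μ).getD (Tm.var n μ))) →
    GoodT Ω σ (Ω.sub θ s)
  | _, .var n σ, θ, hθ => by rw [Ω.s1]; exact hθ n σ
  | _, .neg, θ, hθ => by
      rw [Ω.s1neg]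
      exact goodT_atomic Ω Tm.neg Atomic.neg
  | _, .eq σ, θ, hθ => by
      rw [Ω.s1eq]
      exact goodT_atomic Ω (Tm.eq σ) (Atomic.eq σ)
  | _, .app f u, θ, hθ => by
      rw [Ω.s2]
      exact goodT_fundamental f θ hθ _ (goodT_fundamental u θ hθ)
  | _, .lam x σ b, θ, hθ => fun u gu => by
      refine goodT_congr Ω _ (Ω.s3 θ x σ b u).symm ?_
      exact goodT_fundamental b (updS θ x σ u) (fun n μ => by
        unfold updS
        split
        · rename_i hcond
          obtain ⟨rfl, rfl⟩ := hcond
          exact gu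
        · exact hθ n μ)

lemma goodT_all {σ : Ty} (s : Tm σ) : GoodT Ω σ s := by
  have h := goodT_fundamental Ω s (fun _ _ => none) (fun n μ => by
    exact goodT_atomic Ω (Tm.var n μ) (Atomic.var n μ))
  exact goodT_congr Ω σ (Ω.s4 s) h

/-- Structure lemma: the normal form of a term of base type is an atomic head applied
to a spine of normal arguments. -/
lemma nf_structure {β : ℕ} (t : Tm (Ty.base β)) :
    ∃ (σ' : Ty) (h : Tm σ') (a : Args σ' (Ty.base β)),
      Atomic h ∧ nfA Ω a = a ∧ Ω.nf t = applyArgs h a := by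
  obtain ⟨σ', h, a, hat, he⟩ := goodT_all Ω t
  exact ⟨σ', h, nfA Ω a, hat, nfA_nfA Ω a, he⟩

end NormFacts

section Acc

variable (Ω : NormOp)

/-- Bound on the free variables of a term. -/
lemma free_bound : ∀ {σ : Ty} (u : Tm σ), ∃ N : ℕ, ∀ x ≥ N, ∀ μ, ¬ FreeIn x μ u
  | _, .var n σ => ⟨n + 1, fun x hx μ h => by
      obtain ⟨rfl, -⟩ := h; omega⟩
  | _, .neg => ⟨0, fun _ _ _ h => h⟩
  | _, .eq σ => ⟨0, fun _ _ _ h => h⟩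
  | _, .app s t => by
      obtain ⟨N₁, h₁⟩ := free_bound s
      obtain ⟨N₂, h₂⟩ := free_bound t
      exact ⟨max N₁ N₂, fun x hx μ h => by
        rcases h with h | h
        · exact h₁ x (le_trans (le_max_left _ _) hx) μ h
        · exact h₂ x (le_trans (le_max_right _ _) hx) μ h⟩
  | _, .lam n σ s => by
      obtain ⟨N, h⟩ := free_bound s
      exact ⟨N, fun x hx μ hf => h x hx μ hf.2⟩

lemma fresh_var {A : Set (Tm Ty.o)} (hA : A.Finite) :
    ∃ N : ℕ, ∀ u ∈ A, ∀ x ≥ N, ∀ μ, ¬ FreeIn x μ u := by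
  classical
  set f : Tm Ty.o → ℕ := fun u => Classical.choose (free_bound u) with hf
  refine ⟨Finset.sup hA.toFinset f, ?_⟩
  intro u hu x hx μ
  have hb := Classical.choose_spec (free_bound u)
  refine hb x (le_trans ?_ hx) μ
  exact Finset.le_sup (f := f) (hA.mem_toFinset.mpr hu)

/-- Normality of the disequation list of a pair of normal spines. -/
lemma diseqs_normal : ∀ {σ ρ : Ty} (p : Args2 σ ρ), nfA Ω p.left = p.left →
    nfA Ω p.right = p.right → ∀ d ∈ p.diseqs, Ω.nf d = d := by
  intro σ ρ p
  induction p with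
  | nil => intro _ _ d hd; exact absurd hd List.not_mem_nil
  | cons s t p ih =>
    intro hl hr d hd
    have hl' : Args.cons (Ω.nf s) (nfA Ω p.left) = Args.cons s p.left := hl
    have hr' : Args.cons (Ω.nf t) (nfA Ω p.right) = Args.cons t p.right := hr
    rw [args_cons_inj] at hl' hr'
    simp only [Args2.diseqs] at hd
    rcases List.mem_cons.mp hd with rfl | hd
    · rw [nf_Diseq, hl'.1, hr'.1]
    · exact ih hl'.2 hr'.2 d hd

def Gamma : Set (Set (Tm Ty.o)) :=
  {A : Set (Tm Ty.o) | A.Finite ∧ (∀ s ∈ A, Ω.nf s = s) ∧ ¬ Refutable Ω A}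

variable {Ω}

lemma Gamma.notClosed {A : Set (Tm Ty.o)} (hA : A ∈ Gamma Ω) : ¬ ClosedB A :=
  fun h => hA.2.2 (Refutable.closed h)

lemma Gamma.ref {A : Set (Tm Ty.o)} (hA : A.Finite) (hn : ∀ s ∈ A, Ω.nf s = s)
    (h : A ∉ Gamma Ω) : Refutable Ω A := by
  by_contra hr
  exact h ⟨hA, hn, hr⟩

lemma Gamma.insert1 {A : Set (Tm Ty.o)} (hA : A ∈ Gamma Ω) {s : Tm Ty.o}
    (hs : Ω.nf s = s) (hr : ¬ Refutable Ω (insert s A)) : insert s A ∈ Gamma Ω := by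
  refine ⟨hA.1.insert _, ?_, hr⟩
  rintro u (rfl | hu)
  · exact hs
  · exact hA.2.1 u hu

lemma Gamma.insert2 {A : Set (Tm Ty.o)} (hA : A ∈ Gamma Ω) {s t : Tm Ty.o}
    (hs : Ω.nf s = s) (ht : Ω.nf t = t) (hr : ¬ Refutable Ω (insert s (insert t A))) :
    insert s (insert t A) ∈ Gamma Ω := by
  refine ⟨(hA.1.insert _).insert _, ?_, hr⟩
  rintro u (rfl | rfl | hu)
  · exact hs
  · exact ht
  · exact hA.2.1 u hu

lemma acc_gamma : ACC Ω (Gamma Ω) := by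
  constructor
  · -- dn
    intro A hA s hs
    have hns : Ω.nf s = s := normal_Not Ω (normal_Not Ω (hA.2.1 _ hs))
    refine Gamma.insert1 hA hns ?_
    exact fun hr => hA.2.2 (Refutable.dn (Gamma.notClosed hA) hs hr)
  · -- bq
    intro A hA s t hst
    obtain ⟨hns, hnt⟩ := normal_Eqn Ω (hA.2.1 _ hst)
    by_contra hcon
    push_neg at hcon
    obtain ⟨h1, h2⟩ := hcon
    have r1 : Refutable Ω (insert s (insert t A)) := by
      by_contra hr; exact h1 (Gamma.insert2 hA hns hnt hr)
    have r2 : Refutable Ω (insert (Tm.Not s) (insert (Tm.Not t) A)) := by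
      by_contra hr
      exact h2 (Gamma.insert2 hA (by rw [nf_Not, hns]) (by rw [nf_Not, hnt]) hr)
    exact hA.2.2 (Refutable.bq s t (Gamma.notClosed hA) hst r1 r2)
  · -- be
    intro A hA s t hst
    obtain ⟨hns, hnt⟩ := normal_Diseq Ω (hA.2.1 _ hst)
    by_contra hcon
    push_neg at hcon
    obtain ⟨h1, h2⟩ := hcon
    have r1 : Refutable Ω (insert s (insert (Tm.Not t) A)) := by
      by_contra hr
      exact h1 (Gamma.insert2 hA hns (by rw [nf_Not, hnt]) hr)
    have r2 : Refutable Ω (insert (Tm.Not s) (insert t A)) := by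
      by_contra hr
      exact h2 (Gamma.insert2 hA (by rw [nf_Not, hns]) hnt hr)
    exact hA.2.2 (Refutable.be s t (Gamma.notClosed hA) hst r1 r2)
  · -- fq
    intro A hA σ τ s t hst u hu
    refine Gamma.insert1 hA (by rw [nf_Eqn, Ω.n1, Ω.n1]) ?_
    exact fun hr => hA.2.2 (Refutable.fq s t u (Gamma.notClosed hA) hst hu hr)
  · -- fe
    intro A hA σ τ s t hst
    by_cases hex : ∃ y : ℕ,
        Tm.Diseq (Ω.nf (Tm.app s (Tm.var y σ))) (Ω.nf (Tm.app t (Tm.var y σ))) ∈ A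
    · obtain ⟨y, hy⟩ := hex
      exact ⟨y, by rwa [Set.insert_eq_self.mpr hy]⟩
    · obtain ⟨N, hN⟩ := fresh_var hA.1
      refine ⟨N, Gamma.insert1 hA (by rw [nf_Diseq, Ω.n1, Ω.n1]) ?_⟩
      intro hr
      exact hA.2.2 (Refutable.fe s t N (Gamma.notClosed hA) hst
        (fun u hu => hN u hu N (le_refl N) σ) hex hr)
  · -- mat
    intro A hA σ x p hl hr
    have hnl : nfA Ω p.left = p.left :=
      normal_applyArgs_var Ω (hA.2.1 _ hl)
    have hnr : nfA Ω p.right = p.right :=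
      normal_applyArgs_var Ω (normal_Not Ω (hA.2.1 _ hr))
    by_contra hcon
    push_neg at hcon
    have hrall : ∀ d ∈ p.diseqs, Refutable Ω (insert d A) := by
      intro d hd
      have hnd : Ω.nf d = d := diseqs_normal Ω p hnl hnr d hd
      by_contra hrd
      exact hcon d hd (Gamma.insert1 hA hnd hrd)
    exact hA.2.2 (Refutable.mat x p (Gamma.notClosed hA) hl hr hrall)
  · -- dec
    intro A hA σ α x p hd
    obtain ⟨hl, hr⟩ := normal_Diseq Ω (hA.2.1 _ hd)
    have hnl : nfA Ω p.left = p.left := normal_applyArgs_var Ω hl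
    have hnr : nfA Ω p.right = p.right := normal_applyArgs_var Ω hr
    by_contra hcon
    push_neg at hcon
    have hrall : ∀ d ∈ p.diseqs, Refutable Ω (insert d A) := by
      intro d hdd
      have hnd : Ω.nf d = d := diseqs_normal Ω p hnl hnr d hdd
      by_contra hrd
      exact hcon d hdd (Gamma.insert1 hA hnd hrd)
    exact hA.2.2 (Refutable.dec x p (Gamma.notClosed hA) hd hrall)
  · -- con
    intro A hA α s t u v hst huv
    obtain ⟨hns, hnt⟩ := normal_Eqn Ω (hA.2.1 _ hst)
    obtain ⟨hnu, hnv⟩ := normal_Diseq Ω (hA.2.1 _ huv)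
    by_contra hcon
    push_neg at hcon
    obtain ⟨h1, h2⟩ := hcon
    have r1 : Refutable Ω (insert (Tm.Diseq s u) (insert (Tm.Diseq t u) A)) := by
      by_contra hr
      exact h1 (Gamma.insert2 hA (by rw [nf_Diseq, hns, hnu]) (by rw [nf_Diseq, hnt, hnu]) hr)
    have r2 : Refutable Ω (insert (Tm.Diseq s v) (insert (Tm.Diseq t v) A)) := by
      by_contra hr
      exact h2 (Gamma.insert2 hA (by rw [nf_Diseq, hns, hnv]) (by rw [nf_Diseq, hnt, hnv]) hr)
    exact hA.2.2 (Refutable.con s t u v (Gamma.notClosed hA) hst huv r1 r2)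

end Acc

section Codes

/-- Injective code of types. -/
def codeTy : Ty → ℕ
  | .base n => Nat.pair 0 n
  | .arr s t => Nat.pair 1 (Nat.pair (codeTy s) (codeTy t))

lemma codeTy_inj : ∀ s t : Ty, codeTy s = codeTy t → s = t := by
  intro s
  induction s with
  | base n =>
    intro t h
    cases t with
    | base m => simp [codeTy, Nat.pair_eq_pair] at h; rw [h]
    | arr a b => simp [codeTy, Nat.pair_eq_pair] at h
  | arr a b iha ihb =>
    intro t h
    cases t with
    | base m => simp [codeTy, Nat.pair_eq_pair] at h
    | arr c d =>
      simp [codeTy, Nat.pair_eq_pair] at h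
      rw [iha c h.1, ihb d h.2]

/-- Injective code of terms (jointly over all types). -/
def codeTm : ∀ {σ : Ty}, Tm σ → ℕ
  | _, .var n σ => Nat.pair 0 (Nat.pair n (codeTy σ))
  | _, .neg => Nat.pair 1 0
  | _, .eq σ => Nat.pair 2 (codeTy σ)
  | _, .app f a => Nat.pair 3 (Nat.pair (codeTm f) (codeTm a))
  | _, .lam n σ b => Nat.pair 4 (Nat.pair n (Nat.pair (codeTy σ) (codeTm b)))

lemma codeTm_inj : ∀ {σ τ : Ty} (s : Tm σ) (t : Tm τ), codeTm s = codeTm t →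
    σ = τ ∧ HEq s t := by
  intro σ τ s
  induction s generalizing τ with
  | var n σ =>
    intro t h
    cases t <;> simp [codeTm, Nat.pair_eq_pair] at h
    obtain ⟨rfl, h2⟩ := h
    obtain rfl := codeTy_inj _ _ h2
    exact ⟨rfl, HEq.rfl⟩
  | neg =>
    intro t h
    cases t <;> simp [codeTm, Nat.pair_eq_pair] at h
    exact ⟨rfl, HEq.rfl⟩
  | eq σ =>
    intro t h
    cases t <;> simp [codeTm, Nat.pair_eq_pair] at h
    obtain rfl := codeTy_inj _ _ h
    exact ⟨rfl, HEq.rfl⟩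
  | app f a ihf iha =>
    intro t h
    cases t with
    | var _ _ => simp [codeTm, Nat.pair_eq_pair] at h
    | neg => simp [codeTm, Nat.pair_eq_pair] at h
    | eq _ => simp [codeTm, Nat.pair_eq_pair] at h
    | lam _ _ _ => simp [codeTm, Nat.pair_eq_pair] at h
    | app f' a' =>
      simp only [codeTm, Nat.pair_eq_pair] at h
      obtain ⟨hf, ha⟩ := h.2
      obtain ⟨hty1, hh1⟩ := ihf f' hf
      obtain ⟨hty2, hh2⟩ := iha a' ha
      subst hty2
      have harr : _ = _ ∧ _ := Ty.arr.injEq .. ▸ hty1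
      injection hty1 with e1 e2
      subst e2
      obtain rfl := eq_of_heq hh1
      obtain rfl := eq_of_heq hh2
      exact ⟨rfl, HEq.rfl⟩
  | lam n σ b ihb =>
    intro t h
    cases t with
    | var _ _ => simp [codeTm, Nat.pair_eq_pair] at h
    | neg => simp [codeTm, Nat.pair_eq_pair] at h
    | eq _ => simp [codeTm, Nat.pair_eq_pair] at h
    | app _ _ => simp [codeTm, Nat.pair_eq_pair] at h
    | lam n' σ' b' =>
      simp only [codeTm, Nat.pair_eq_pair] at h
      obtain ⟨-, rfl, hty, hb⟩ := h
      obtain rfl := codeTy_inj _ _ hty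
      obtain ⟨rfl, hh⟩ := ihb b' hb
      obtain rfl := eq_of_heq hh
      exact ⟨rfl, HEq.rfl⟩

open Classical in
noncomputable def enumTm (σ : Ty) : ℕ → Option (Tm σ) := fun n =>
  if h : ∃ t : Tm σ, codeTm t = n then some h.choose else none

lemma enumTm_complete {σ : Ty} (t : Tm σ) : enumTm σ (codeTm t) = some t := by
  unfold enumTm
  rw [dif_pos ⟨t, rfl⟩]
  congr 1
  have h := (⟨t, rfl⟩ : ∃ s : Tm σ, codeTm s = codeTm t).choose_spec
  exact eq_of_heq (codeTm_inj _ t h).2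

/-- Saturation tasks: one constructor per tableau rule. -/
inductive STask : Type
  | dn : Tm Ty.o → STask
  | bq : Tm Ty.o → STask
  | be : Tm Ty.o → STask
  | fe : Tm Ty.o → STask
  | dec : Tm Ty.o → STask
  | mat : Tm Ty.o → Tm Ty.o → STask
  | con : Tm Ty.o → Tm Ty.o → STask
  | fq : ∀ σ : Ty, Tm Ty.o → Tm σ → STask

def codeTask : STask → ℕ
  | .dn f => Nat.pair 0 (codeTm f)
  | .bq f => Nat.pair 1 (codeTm f)
  | .be f => Nat.pair 2 (codeTm f)
  | .fe f => Nat.pair 3 (codeTm f)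
  | .dec f => Nat.pair 4 (codeTm f)
  | .mat f g => Nat.pair 5 (Nat.pair (codeTm f) (codeTm g))
  | .con f g => Nat.pair 6 (Nat.pair (codeTm f) (codeTm g))
  | .fq _ f u => Nat.pair 7 (Nat.pair (codeTm f) (codeTm u))

lemma codeTask_inj (a b : STask) (h : codeTask a = codeTask b) : a = b := by
  cases a <;> cases b <;> simp [codeTask, Nat.pair_eq_pair] at h
  case dn.dn | bq.bq | be.be | fe.fe | dec.dec =>
    obtain rfl := eq_of_heq (codeTm_inj _ _ h).2; rfl
  case mat.mat | con.con =>
    obtain ⟨h1, h2⟩ := h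
    obtain rfl := eq_of_heq (codeTm_inj _ _ h1).2
    obtain rfl := eq_of_heq (codeTm_inj _ _ h2).2
    rfl
  case fq.fq =>
    obtain ⟨h1, h2⟩ := h
    obtain rfl := eq_of_heq (codeTm_inj _ _ h1).2
    obtain ⟨hty, hh⟩ := codeTm_inj _ _ h2
    subst hty
    obtain rfl := eq_of_heq hh
    rfl

open Classical in
noncomputable def enumTask : ℕ → Option STask := fun n =>
  if h : ∃ t : STask, codeTask t = n then some h.choose else none

lemma enumTask_complete (t : STask) : enumTask (codeTask t) = some t := by
  unfold enumTask
  rw [dif_pos ⟨t, rfl⟩]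
  congr 1
  exact codeTask_inj _ t (⟨t, rfl⟩ : ∃ s : STask, codeTask s = codeTask t).choose_spec

lemma args2_ext : ∀ {σ ρ : Ty} (p q : Args2 σ ρ), p.left = q.left → p.right = q.right → p = q := by
  intro σ ρ p
  induction p with
  | nil =>
    intro q hl hr
    cases q with
    | nil => rfl
    | cons s' t' q' => simp [Args2.left] at hl
  | cons s t p ih =>
    intro q hl hr
    cases q with
    | nil => simp [Args2.left] at hl
    | cons s' t' q' =>
      have hl' : Args.cons s p.left = Args.cons s' (Args2.left q') := hl
      have hr' : Args.cons t p.right = Args.cons t' (Args2.right q') := hr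
      rw [args_cons_inj] at hl' hr'
      rw [hl'.1, hr'.1, ih q' hl'.2 hr'.2]

end Codes

section Saturate

variable (Ω : NormOp)

/-- What it means for a task to have been performed on `S`, with results in `S'`. -/
def taskDone : STask → Set (Tm Ty.o) → Set (Tm Ty.o) → Prop
  | .dn f, S, S' => ∀ s : Tm Ty.o, f = Tm.Not (Tm.Not s) → f ∈ S → s ∈ S'
  | .bq f, S, S' => ∀ s t : Tm Ty.o, f = Tm.Eqn s t → f ∈ S →
      (s ∈ S' ∧ t ∈ S') ∨ (Tm.Not s ∈ S' ∧ Tm.Not t ∈ S')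
  | .be f, S, S' => ∀ s t : Tm Ty.o, f = Tm.Diseq s t → f ∈ S →
      (s ∈ S' ∧ Tm.Not t ∈ S') ∨ (Tm.Not s ∈ S' ∧ t ∈ S')
  | .fe f, S, S' => ∀ (σ τ : Ty) (s t : Tm (Ty.arr σ τ)), f = Tm.Diseq s t → f ∈ S →
      ∃ x, Tm.Diseq (Ω.nf (Tm.app s (Tm.var x σ))) (Ω.nf (Tm.app t (Tm.var x σ))) ∈ S'
  | .dec f, S, S' => ∀ (σ : Ty) (α x : ℕ) (p : Args2 σ (Ty.sort α)),
      f = Tm.Diseq (applyArgs (Tm.var x σ) p.left) (applyArgs (Tm.var x σ) p.right) → f ∈ S →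
      ∃ d ∈ p.diseqs, d ∈ S'
  | .mat f g, S, S' => ∀ (σ : Ty) (x : ℕ) (p : Args2 σ Ty.o),
      f = applyArgs (Tm.var x σ) p.left → g = Tm.Not (applyArgs (Tm.var x σ) p.right) →
      f ∈ S → g ∈ S → ∃ d ∈ p.diseqs, d ∈ S'
  | .con f g, S, S' => ∀ (α : ℕ) (s t u v : Tm (Ty.sort α)), f = Tm.Eqn s t →
      g = Tm.Diseq u v → f ∈ S → g ∈ S →
      (Tm.Diseq s u ∈ S' ∧ Tm.Diseq t u ∈ S') ∨ (Tm.Diseq s v ∈ S' ∧ Tm.Diseq t v ∈ S')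
  | .fq σ f u, S, S' => ∀ (τ : Ty) (s t : Tm (Ty.arr σ τ)), f = Tm.Eqn s t → f ∈ S →
      Ω.nf u = u → Tm.Eqn (Ω.nf (Tm.app s u)) (Ω.nf (Tm.app t u)) ∈ S'

lemma step_ex (S : Set (Tm Ty.o)) (hS : S ∈ Gamma Ω) (t : STask) :
    ∃ S', S' ∈ Gamma Ω ∧ S ⊆ S' ∧ taskDone Ω t S S' := by
  classical
  cases t with
  | dn f =>
    by_cases h : (∃ s : Tm Ty.o, f = Tm.Not (Tm.Not s)) ∧ f ∈ S
    · obtain ⟨⟨s, rfl⟩, hf⟩ := h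
      exact ⟨insert s S, acc_gamma.dn S hS s hf, Set.subset_insert _ _,
        fun s' hs' _ => by
          obtain rfl := Not_inj (Not_inj hs')
          exact Set.mem_insert _ _⟩
    · exact ⟨S, hS, subset_rfl, fun s' h1 h2 => absurd ⟨⟨s', h1⟩, h2⟩ h⟩
  | bq f =>
    by_cases h : (∃ s t : Tm Ty.o, f = Tm.Eqn s t) ∧ f ∈ S
    · obtain ⟨⟨s, t, rfl⟩, hf⟩ := h
      rcases acc_gamma.bq S hS s t hf with hΓ | hΓ
      · refine ⟨insert s (insert t S), hΓ, (Set.subset_insert _ _).trans (Set.subset_insert _ _), ?_⟩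
        intro s' t' he _
        obtain ⟨rfl, rfl⟩ := Eqn_inj' he
        exact Or.inl ⟨Set.mem_insert _ _, Set.mem_insert_of_mem _ (Set.mem_insert _ _)⟩
      · refine ⟨insert (Tm.Not s) (insert (Tm.Not t) S), hΓ,
          (Set.subset_insert _ _).trans (Set.subset_insert _ _), ?_⟩
        intro s' t' he _
        obtain ⟨rfl, rfl⟩ := Eqn_inj' he
        exact Or.inr ⟨Set.mem_insert _ _, Set.mem_insert_of_mem _ (Set.mem_insert _ _)⟩
    · exact ⟨S, hS, subset_rfl, fun s' t' h1 h2 => absurd ⟨⟨s', t', h1⟩, h2⟩ h⟩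
  | be f =>
    by_cases h : (∃ s t : Tm Ty.o, f = Tm.Diseq s t) ∧ f ∈ S
    · obtain ⟨⟨s, t, rfl⟩, hf⟩ := h
      rcases acc_gamma.be S hS s t hf with hΓ | hΓ
      · refine ⟨insert s (insert (Tm.Not t) S), hΓ,
          (Set.subset_insert _ _).trans (Set.subset_insert _ _), ?_⟩
        intro s' t' he _
        obtain ⟨rfl, rfl⟩ := Eqn_inj' (Not_inj he)
        exact Or.inl ⟨Set.mem_insert _ _, Set.mem_insert_of_mem _ (Set.mem_insert _ _)⟩
      · refine ⟨insert (Tm.Not s) (insert t S), hΓ,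
          (Set.subset_insert _ _).trans (Set.subset_insert _ _), ?_⟩
        intro s' t' he _
        obtain ⟨rfl, rfl⟩ := Eqn_inj' (Not_inj he)
        exact Or.inr ⟨Set.mem_insert _ _, Set.mem_insert_of_mem _ (Set.mem_insert _ _)⟩
    · exact ⟨S, hS, subset_rfl, fun s' t' h1 h2 => absurd ⟨⟨s', t', h1⟩, h2⟩ h⟩
  | fe f =>
    by_cases h : (∃ (σ τ : Ty) (s t : Tm (Ty.arr σ τ)), f = Tm.Diseq s t) ∧ f ∈ S
    · obtain ⟨⟨σ, τ, s, t, rfl⟩, hf⟩ := h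
      obtain ⟨x, hΓ⟩ := acc_gamma.fe S hS s t hf
      refine ⟨_, hΓ, Set.subset_insert _ _, ?_⟩
      intro σ' τ' s' t' he _
      obtain ⟨hty, hs, ht⟩ := Diseq_inj he
      injection hty with e1 e2
      subst e1; subst e2
      obtain rfl := eq_of_heq hs
      obtain rfl := eq_of_heq ht
      exact ⟨x, Set.mem_insert _ _⟩
    · exact ⟨S, hS, subset_rfl,
        fun σ' τ' s' t' h1 h2 => absurd ⟨⟨σ', τ', s', t', h1⟩, h2⟩ h⟩
  | dec f =>
    by_cases h : (∃ (σ : Ty) (α x : ℕ) (p : Args2 σ (Ty.sort α)),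
        f = Tm.Diseq (applyArgs (Tm.var x σ) p.left) (applyArgs (Tm.var x σ) p.right)) ∧ f ∈ S
    · obtain ⟨⟨σ, α, x, p, rfl⟩, hf⟩ := h
      obtain ⟨d, hd, hΓ⟩ := acc_gamma.dec S hS x p hf
      refine ⟨insert d S, hΓ, Set.subset_insert _ _, ?_⟩
      intro σ' α' x' p' he _
      obtain ⟨hty, hs, ht⟩ := Diseq_inj he
      have hα : α = α' := by
        injection hty with e
        omega
      subst hα
      have hl := eq_of_heq hs
      have hr := eq_of_heq ht
      obtain ⟨hσ, hx, hpl⟩ := spine_unique_var _ _ _ _ hl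
      subst hσ; subst hx
      obtain ⟨-, -, hpr⟩ := spine_unique_var _ _ _ _ hr
      obtain rfl := args2_ext p p' (eq_of_heq hpl) (eq_of_heq hpr)
      exact ⟨d, hd, Set.mem_insert _ _⟩
    · exact ⟨S, hS, subset_rfl,
        fun σ' α' x' p' h1 h2 => absurd ⟨⟨σ', α', x', p', h1⟩, h2⟩ h⟩
  | mat f g =>
    by_cases h : (∃ (σ : Ty) (x : ℕ) (p : Args2 σ Ty.o),
        f = applyArgs (Tm.var x σ) p.left ∧ g = Tm.Not (applyArgs (Tm.var x σ) p.right))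
        ∧ f ∈ S ∧ g ∈ S
    · obtain ⟨⟨σ, x, p, rfl, rfl⟩, hf, hg⟩ := h
      obtain ⟨d, hd, hΓ⟩ := acc_gamma.mat S hS x p hf hg
      refine ⟨insert d S, hΓ, Set.subset_insert _ _, ?_⟩
      intro σ' x' p' hel her _ _
      obtain ⟨hσ, hx, hpl⟩ := spine_unique_var _ _ _ _ hel
      subst hσ; subst hx
      obtain ⟨-, -, hpr⟩ := spine_unique_var _ _ _ _ (Not_inj her)
      obtain rfl := args2_ext p p' (eq_of_heq hpl) (eq_of_heq hpr)
      exact ⟨d, hd, Set.mem_insert _ _⟩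
    · exact ⟨S, hS, subset_rfl,
        fun σ' x' p' h1 h2 h3 h4 => absurd ⟨⟨σ', x', p', h1, h2⟩, h3, h4⟩ h⟩
  | con f g =>
    by_cases h : (∃ (α : ℕ) (s t u v : Tm (Ty.sort α)),
        f = Tm.Eqn s t ∧ g = Tm.Diseq u v) ∧ f ∈ S ∧ g ∈ S
    · obtain ⟨⟨α, s, t, u, v, rfl, rfl⟩, hf, hg⟩ := h
      rcases acc_gamma.con S hS s t u v hf hg with hΓ | hΓ
      · refine ⟨_, hΓ, (Set.subset_insert _ _).trans (Set.subset_insert _ _), ?_⟩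
        intro α' s' t' u' v' he1 he2 _ _
        obtain ⟨hty, hs, ht⟩ := Eqn_inj he1
        have hα : α = α' := by injection hty with e; omega
        subst hα
        obtain rfl := eq_of_heq hs
        obtain rfl := eq_of_heq ht
        obtain ⟨rfl, rfl⟩ := Eqn_inj' (Not_inj he2)
        exact Or.inl ⟨Set.mem_insert _ _, Set.mem_insert_of_mem _ (Set.mem_insert _ _)⟩
      · refine ⟨_, hΓ, (Set.subset_insert _ _).trans (Set.subset_insert _ _), ?_⟩
        intro α' s' t' u' v' he1 he2 _ _
        obtain ⟨hty, hs, ht⟩ := Eqn_inj he1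
        have hα : α = α' := by injection hty with e; omega
        subst hα
        obtain rfl := eq_of_heq hs
        obtain rfl := eq_of_heq ht
        obtain ⟨rfl, rfl⟩ := Eqn_inj' (Not_inj he2)
        exact Or.inr ⟨Set.mem_insert _ _, Set.mem_insert_of_mem _ (Set.mem_insert _ _)⟩
    · exact ⟨S, hS, subset_rfl,
        fun α' s' t' u' v' h1 h2 h3 h4 => absurd ⟨⟨α', s', t', u', v', h1, h2⟩, h3, h4⟩ h⟩
  | fq σ f u =>
    by_cases h : (∃ (τ : Ty) (s t : Tm (Ty.arr σ τ)), f = Tm.Eqn s t) ∧ f ∈ S ∧ Ω.nf u = u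
    · obtain ⟨⟨τ, s, t, rfl⟩, hf, hu⟩ := h
      have hΓ := acc_gamma.fq S hS s t hf u hu
      refine ⟨_, hΓ, Set.subset_insert _ _, ?_⟩
      intro τ' s' t' he _ _
      obtain ⟨hty, hs, ht⟩ := Eqn_inj he
      injection hty with e1 e2
      subst e2
      obtain rfl := eq_of_heq hs
      obtain rfl := eq_of_heq ht
      exact Set.mem_insert _ _
    · exact ⟨S, hS, subset_rfl,
        fun τ' s' t' h1 h2 h3 => absurd ⟨⟨τ', s', t', h1⟩, h2, h3⟩ h⟩

noncomputable def stepS (S : {S : Set (Tm Ty.o) // S ∈ Gamma Ω}) :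
    Option STask → {S : Set (Tm Ty.o) // S ∈ Gamma Ω}
  | none => S
  | some t => ⟨(step_ex Ω S.1 S.2 t).choose, (step_ex Ω S.1 S.2 t).choose_spec.1⟩

lemma stepS_sub (S : {S : Set (Tm Ty.o) // S ∈ Gamma Ω}) (t : Option STask) :
    S.1 ⊆ (stepS Ω S t).1 := by
  cases t with
  | none => exact subset_rfl
  | some t => exact (step_ex Ω S.1 S.2 t).choose_spec.2.1

lemma stepS_done (S : {S : Set (Tm Ty.o) // S ∈ Gamma Ω}) (t : STask) :
    taskDone Ω t S.1 (stepS Ω S (some t)).1 :=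
  (step_ex Ω S.1 S.2 t).choose_spec.2.2

variable {Ω}

noncomputable def chain (A : {S : Set (Tm Ty.o) // S ∈ Gamma Ω}) : ℕ → {S : Set (Tm Ty.o) // S ∈ Gamma Ω}
  | 0 => A
  | k + 1 => stepS Ω (chain A k) (enumTask (Nat.unpair k).1)

lemma chain_mono (A : {S : Set (Tm Ty.o) // S ∈ Gamma Ω}) {j k : ℕ} (h : j ≤ k) :
    (chain A j).1 ⊆ (chain A k).1 := by
  induction k with
  | zero => obtain rfl : j = 0 := Nat.le_zero.mp h; exact subset_rfl
  | succ k ih =>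
    rcases Nat.lt_or_ge j (k+1) with h' | h'
    · exact (ih (Nat.lt_succ_iff.mp h')).trans (stepS_sub Ω (chain A k) _)
    · obtain rfl : j = k + 1 := le_antisymm h h'
      exact subset_rfl

/-- The saturated extension. -/
def chainLim (A : {S : Set (Tm Ty.o) // S ∈ Gamma Ω}) : Set (Tm Ty.o) :=
  ⋃ k, (chain A k).1

lemma chainLim_exec (A : {S : Set (Tm Ty.o) // S ∈ Gamma Ω}) (t : STask) (k : ℕ) :
    ∃ m ≥ k, taskDone Ω t (chain A m).1 (chain A (m+1)).1 := by
  refine ⟨Nat.pair (codeTask t) k, Nat.right_le_pair _ _, ?_⟩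
  have : chain A (Nat.pair (codeTask t) k + 1)
      = stepS Ω (chain A (Nat.pair (codeTask t) k)) (enumTask (Nat.unpair (Nat.pair (codeTask t) k)).1) := rfl
  rw [this, Nat.unpair_pair]
  simp only [enumTask_complete]
  exact stepS_done Ω _ t

lemma mem_chainLim {A : {S : Set (Tm Ty.o) // S ∈ Gamma Ω}} {s : Tm Ty.o} :
    s ∈ chainLim A ↔ ∃ k, s ∈ (chain A k).1 := Set.mem_iUnion

/-- Execute a task whose (at most two) premises already occur in the limit. -/
lemma chainLim_task (A : {S : Set (Tm Ty.o) // S ∈ Gamma Ω}) (t : STask) (k : ℕ) :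
    ∃ m, taskDone Ω t (chain A k).1 (chain A m).1 := by
  obtain ⟨m, hm, hd⟩ := chainLim_exec A t k
  refine ⟨m + 1, ?_⟩
  -- weaken the premise set from `chain A m` to `chain A k`
  cases t with
  | dn f => exact fun s h1 h2 => hd s h1 (chain_mono A hm h2)
  | bq f => exact fun s t h1 h2 => hd s t h1 (chain_mono A hm h2)
  | be f => exact fun s t h1 h2 => hd s t h1 (chain_mono A hm h2)
  | fe f => exact fun σ τ s t h1 h2 => hd σ τ s t h1 (chain_mono A hm h2)
  | dec f => exact fun σ α x p h1 h2 => hd σ α x p h1 (chain_mono A hm h2)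
  | mat f g =>
    exact fun σ x p h1 h2 h3 h4 => hd σ x p h1 h2 (chain_mono A hm h3) (chain_mono A hm h4)
  | con f g =>
    exact fun α s t u v h1 h2 h3 h4 => hd α s t u v h1 h2 (chain_mono A hm h3) (chain_mono A hm h4)
  | fq σ f u => exact fun τ s t h1 h2 h3 => hd τ s t h1 (chain_mono A hm h2) h3

theorem extension_lemma {A : Set (Tm Ty.o)} (hA : A ∈ Gamma Ω) :
    ∃ E : Set (Tm Ty.o), A ⊆ E ∧ (∀ s ∈ E, Ω.nf s = s) ∧ Evident Ω E := by
  set A' : {S : Set (Tm Ty.o) // S ∈ Gamma Ω} := ⟨A, hA⟩ with hA'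
  refine ⟨chainLim A', fun s hs => mem_chainLim.mpr ⟨0, hs⟩, ?_, ?_⟩
  · intro s hs
    obtain ⟨k, hk⟩ := mem_chainLim.mp hs
    exact (chain A' k).2.2.1 s hk
  constructor
  · -- dn
    intro s hs
    obtain ⟨k, hk⟩ := mem_chainLim.mp hs
    obtain ⟨m, hd⟩ := chainLim_task A' (.dn (Tm.Not (Tm.Not s))) k
    exact mem_chainLim.mpr ⟨m, hd s rfl hk⟩
  · -- bq
    intro s t hst
    obtain ⟨k, hk⟩ := mem_chainLim.mp hst
    obtain ⟨m, hd⟩ := chainLim_task A' (.bq (Tm.Eqn s t)) k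
    rcases hd s t rfl hk with ⟨h1, h2⟩ | ⟨h1, h2⟩
    · exact Or.inl ⟨mem_chainLim.mpr ⟨m, h1⟩, mem_chainLim.mpr ⟨m, h2⟩⟩
    · exact Or.inr ⟨mem_chainLim.mpr ⟨m, h1⟩, mem_chainLim.mpr ⟨m, h2⟩⟩
  · -- be
    intro s t hst
    obtain ⟨k, hk⟩ := mem_chainLim.mp hst
    obtain ⟨m, hd⟩ := chainLim_task A' (.be (Tm.Diseq s t)) k
    rcases hd s t rfl hk with ⟨h1, h2⟩ | ⟨h1, h2⟩
    · exact Or.inl ⟨mem_chainLim.mpr ⟨m, h1⟩, mem_chainLim.mpr ⟨m, h2⟩⟩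
    · exact Or.inr ⟨mem_chainLim.mpr ⟨m, h1⟩, mem_chainLim.mpr ⟨m, h2⟩⟩
  · -- fq
    intro σ τ s t hst u hu
    obtain ⟨k, hk⟩ := mem_chainLim.mp hst
    obtain ⟨m, hd⟩ := chainLim_task A' (.fq σ (Tm.Eqn s t) u) k
    exact mem_chainLim.mpr ⟨m, hd τ s t rfl hk hu⟩
  · -- fe
    intro σ τ s t hst
    obtain ⟨k, hk⟩ := mem_chainLim.mp hst
    obtain ⟨m, hd⟩ := chainLim_task A' (.fe (Tm.Diseq s t)) k
    obtain ⟨x, hx⟩ := hd σ τ s t rfl hk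
    exact ⟨x, mem_chainLim.mpr ⟨m, hx⟩⟩
  · -- mat
    intro σ x p hl hr
    obtain ⟨k₁, hk₁⟩ := mem_chainLim.mp hl
    obtain ⟨k₂, hk₂⟩ := mem_chainLim.mp hr
    obtain ⟨m, hd⟩ := chainLim_task A'
      (.mat (applyArgs (Tm.var x σ) p.left) (Tm.Not (applyArgs (Tm.var x σ) p.right)))
      (max k₁ k₂)
    obtain ⟨d, hdm, hdS⟩ := hd σ x p rfl rfl
      (chain_mono A' (le_max_left _ _) hk₁) (chain_mono A' (le_max_right _ _) hk₂)
    exact ⟨d, hdm, mem_chainLim.mpr ⟨m, hdS⟩⟩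
  · -- dec
    intro σ α x p hp
    obtain ⟨k, hk⟩ := mem_chainLim.mp hp
    obtain ⟨m, hd⟩ := chainLim_task A'
      (.dec (Tm.Diseq (applyArgs (Tm.var x σ) p.left) (applyArgs (Tm.var x σ) p.right))) k
    obtain ⟨d, hdm, hdS⟩ := hd σ α x p rfl hk
    exact ⟨d, hdm, mem_chainLim.mpr ⟨m, hdS⟩⟩
  · -- con
    intro α s t u v hst huv
    obtain ⟨k₁, hk₁⟩ := mem_chainLim.mp hst
    obtain ⟨k₂, hk₂⟩ := mem_chainLim.mp huv
    obtain ⟨m, hd⟩ := chainLim_task A' (.con (Tm.Eqn s t) (Tm.Diseq u v)) (max k₁ k₂)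
    rcases hd α s t u v rfl rfl (chain_mono A' (le_max_left _ _) hk₁)
      (chain_mono A' (le_max_right _ _) hk₂) with ⟨h1, h2⟩ | ⟨h1, h2⟩
    · exact Or.inl ⟨mem_chainLim.mpr ⟨m, h1⟩, mem_chainLim.mpr ⟨m, h2⟩⟩
    · exact Or.inr ⟨mem_chainLim.mpr ⟨m, h1⟩, mem_chainLim.mpr ⟨m, h2⟩⟩

end Saturate

section Compat

variable (Ω : NormOp) (E : Set (Tm Ty.o))

/-- Unfolding lemmas for `compat`. -/
lemma compat_o {s t : Tm Ty.o} : compat Ω E Ty.o s t ↔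
    (¬(Ω.nf s ∈ E ∧ Tm.Not (Ω.nf t) ∈ E) ∧ ¬(Tm.Not (Ω.nf s) ∈ E ∧ Ω.nf t ∈ E)) := Iff.rfl

lemma compat_sort {α : ℕ} {s t : Tm (Ty.sort α)} :
    compat Ω E (Ty.sort α) s t ↔ ¬ hashE E (Ω.nf s) (Ω.nf t) := Iff.rfl

lemma compat_arr {σ τ : Ty} {s t : Tm (Ty.arr σ τ)} :
    compat Ω E (Ty.arr σ τ) s t ↔
    ∀ u v : Tm σ, compat Ω E σ u v → compat Ω E τ (Tm.app s u) (Tm.app t v) := Iff.rfl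

lemma hashE_symm {σ : Ty} {s t : Tm σ} (h : hashE E s t) : hashE E t s := h.symm

lemma compat_symm : ∀ (σ : Ty) {s t : Tm σ}, compat Ω E σ s t → compat Ω E σ t s := by
  intro σ
  induction σ with
  | base n =>
    cases n with
    | zero =>
      intro s t h
      exact ⟨fun ⟨h1, h2⟩ => h.2 ⟨h2, h1⟩, fun ⟨h1, h2⟩ => h.1 ⟨h2, h1⟩⟩
    | succ α =>
      intro s t h
      exact fun hh => h (hashE_symm E hh)
  | arr σ τ ihσ ihτ =>
    intro s t h u v huv
    exact ihτ (h v u (ihσ huv))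

lemma compat_congr_left : ∀ (σ : Ty) {s s' t : Tm σ}, Ω.nf s = Ω.nf s' →
    compat Ω E σ s t → compat Ω E σ s' t := by
  intro σ
  induction σ with
  | base n =>
    cases n with
    | zero => intro s s' t he h; rw [compat_o, ← he]; exact h
    | succ α => intro s s' t he h; rw [compat_sort, ← he]; exact h
  | arr σ τ ihσ ihτ =>
    intro s s' t he h u v huv
    exact ihτ (nf_app_congr Ω he u) (h u v huv)

lemma compat_congr_right (σ : Ty) {s t t' : Tm σ} (he : Ω.nf t = Ω.nf t')
    (h : compat Ω E σ s t) : compat Ω E σ s t' :=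
  compat_symm Ω E σ (compat_congr_left Ω E σ he (compat_symm Ω E σ h))

/-- nf on both sides of a pair of spines. -/
def nfArgs2 : ∀ {σ ρ : Ty}, Args2 σ ρ → Args2 σ ρ
  | _, _, .nil => .nil
  | _, _, .cons u v p => .cons (Ω.nf u) (Ω.nf v) (nfArgs2 p)

lemma nfArgs2_left : ∀ {σ ρ : Ty} (p : Args2 σ ρ), (nfArgs2 Ω p).left = nfA Ω p.left
  | _, _, .nil => rfl
  | _, _, .cons u v p => by
    show Args.cons (Ω.nf u) (nfArgs2 Ω p).left = Args.cons (Ω.nf u) (nfA Ω p.left)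
    rw [nfArgs2_left p]

lemma nfArgs2_right : ∀ {σ ρ : Ty} (p : Args2 σ ρ), (nfArgs2 Ω p).right = nfA Ω p.right
  | _, _, .nil => rfl
  | _, _, .cons u v p => by
    show Args.cons (Ω.nf v) (nfArgs2 Ω p).right = Args.cons (Ω.nf v) (nfA Ω p.right)
    rw [nfArgs2_right p]

def Args2.swap : ∀ {σ ρ : Ty}, Args2 σ ρ → Args2 σ ρ
  | _, _, .nil => .nil
  | _, _, .cons u v p => .cons v u p.swap

lemma Args2.swap_left : ∀ {σ ρ : Ty} (p : Args2 σ ρ), p.swap.left = p.right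
  | _, _, .nil => rfl
  | _, _, .cons u v p => by
    show Args.cons v p.swap.left = Args.cons v p.right
    rw [Args2.swap_left p]

lemma Args2.swap_right : ∀ {σ ρ : Ty} (p : Args2 σ ρ), p.swap.right = p.left
  | _, _, .nil => rfl
  | _, _, .cons u v p => by
    show Args.cons u p.swap.right = Args.cons u p.left
    rw [Args2.swap_right p]

def Args2.snoc2 : ∀ {σ μ ρ : Ty}, Args2 σ (Ty.arr μ ρ) → Tm μ → Tm μ → Args2 σ ρ
  | _, _, _, .nil, u, v => .cons u v .nil
  | _, _, _, .cons s t p, u, v => .cons s t (p.snoc2 u v)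

lemma Args2.snoc2_left : ∀ {σ μ ρ : Ty} (p : Args2 σ (Ty.arr μ ρ)) (u v : Tm μ),
    (p.snoc2 u v).left = p.left.snoc u
  | _, _, _, .nil, u, v => rfl
  | _, _, _, .cons s t p, u, v => by
    show Args.cons s (p.snoc2 u v).left = Args.cons s (p.left.snoc u)
    rw [Args2.snoc2_left p]

lemma Args2.snoc2_right : ∀ {σ μ ρ : Ty} (p : Args2 σ (Ty.arr μ ρ)) (u v : Tm μ),
    (p.snoc2 u v).right = p.right.snoc v
  | _, _, _, .nil, u, v => rfl
  | _, _, _, .cons s t p, u, v => by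
    show Args.cons t (p.snoc2 u v).right = Args.cons t (p.right.snoc v)
    rw [Args2.snoc2_right p]

/-- Pointwise compatibility of a pair of spines. -/
def compatAll : ∀ {σ ρ : Ty}, Args2 σ ρ → Prop
  | _, _, .nil => True
  | _, _, @Args2.cons σ' _ _ u v p => compat Ω E σ' u v ∧ compatAll p

lemma compatAll_swap : ∀ {σ ρ : Ty} (p : Args2 σ ρ), compatAll Ω E p → compatAll Ω E p.swap
  | _, _, .nil, h => trivial
  | _, _, .cons u v p, h => ⟨compat_symm Ω E _ h.1, compatAll_swap p h.2⟩

lemma compatAll_snoc2 : ∀ {σ μ ρ : Ty} (p : Args2 σ (Ty.arr μ ρ)) (u v : Tm μ),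
    compatAll Ω E p → compat Ω E μ u v → compatAll Ω E (p.snoc2 u v)
  | _, _, _, .nil, u, v, _, huv => ⟨huv, trivial⟩
  | _, _, _, .cons s t p, u, v, h, huv => ⟨h.1, compatAll_snoc2 p u v h.2 huv⟩

/-- Statement forms for the mutual induction. -/
def BProp (σ : Ty) : Prop :=
  ∀ u v : Tm σ, compat Ω E σ u v → ¬ hashE E (Ω.nf u) (Ω.nf v)

def MLProp (μ : Ty) : Prop :=
  ∀ (ρ : Ty) (x : ℕ) (p : Args2 μ ρ), compatAll Ω E p →
    compat Ω E ρ (applyArgs (Tm.var x μ) p.left) (applyArgs (Tm.var x μ) p.right)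

variable {Ω E}

lemma diseqs_helper (hE : Evident Ω E) :
    ∀ {μ ρ : Ty} (p : Args2 μ ρ),
      (∀ σ' : Ty, tySize σ' < tySize μ → BProp Ω E σ') →
      compatAll Ω E p → ∀ d ∈ (nfArgs2 Ω p).diseqs, d ∉ E := by
  intro μ ρ p
  induction p with
  | nil => intro _ _ d hd; exact absurd hd List.not_mem_nil
  | @cons σ' τ _ u v p ih =>
    intro hB hc d hd
    simp only [nfArgs2, Args2.diseqs] at hd
    rcases List.mem_cons.mp hd with rfl | hd
    · intro hdE
      exact hB σ' (by simp [tySize]) u v hc.1 (Or.inl hdE)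
    · exact ih (fun σ'' h => hB σ'' (lt_trans h (by simp [tySize]))) hc.2 d hd

lemma BML (hE : Evident Ω E) :
    ∀ (n : ℕ) (σ : Ty), tySize σ ≤ n → BProp Ω E σ ∧ MLProp Ω E σ := by
  intro n
  induction n with
  | zero => intro σ h; exact absurd h (by have := tySize_pos σ; omega)
  | succ n ih =>
    intro σ hσ
    have hml : MLProp Ω E σ := by
      intro ρ
      induction ρ with
      | base β =>
        intro x p hc
        have hBlt : ∀ σ' : Ty, tySize σ' < tySize σ → BProp Ω E σ' :=
          fun σ' h => (ih σ' (by omega)).1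
        have hL : Ω.nf (applyArgs (Tm.var x σ) p.left)
            = applyArgs (Tm.var x σ) (nfArgs2 Ω p).left := by
          rw [nf_applyArgs_var, nfArgs2_left]
        have hR : Ω.nf (applyArgs (Tm.var x σ) p.right)
            = applyArgs (Tm.var x σ) (nfArgs2 Ω p).right := by
          rw [nf_applyArgs_var, nfArgs2_right]
        have hLs : Ω.nf (applyArgs (Tm.var x σ) p.right)
            = applyArgs (Tm.var x σ) (nfArgs2 Ω p.swap).left := by
          rw [nf_applyArgs_var, nfArgs2_left, Args2.swap_left]
        have hRs : Ω.nf (applyArgs (Tm.var x σ) p.left)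
            = applyArgs (Tm.var x σ) (nfArgs2 Ω p.swap).right := by
          rw [nf_applyArgs_var, nfArgs2_right, Args2.swap_right]
        cases β with
        | zero =>
          constructor
          · rintro ⟨h1, h2⟩
            rw [hL] at h1
            rw [hR] at h2
            obtain ⟨d, hd, hdE⟩ := hE.mat x (nfArgs2 Ω p) h1 h2
            exact diseqs_helper hE p hBlt hc d hd hdE
          · rintro ⟨h1, h2⟩
            rw [hLs] at h2
            rw [hRs] at h1
            obtain ⟨d, hd, hdE⟩ := hE.mat x (nfArgs2 Ω p.swap) h2 h1
            exact diseqs_helper hE p.swap hBlt (compatAll_swap Ω E p hc) d hd hdE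
        | succ α =>
          intro hash
          rcases hash with hdq | hdq
          · rw [hL, hR] at hdq
            have : Tm.Diseq (applyArgs (Tm.var x σ) (nfArgs2 Ω p).left)
                (applyArgs (Tm.var x σ) (nfArgs2 Ω p).right) ∈ E := hdq
            obtain ⟨d, hd, hdE⟩ := hE.dec x (nfArgs2 Ω p) this
            exact diseqs_helper hE p hBlt hc d hd hdE
          · rw [hLs, hRs] at hdq
            obtain ⟨d, hd, hdE⟩ := hE.dec x (nfArgs2 Ω p.swap) hdq
            exact diseqs_helper hE p.swap hBlt (compatAll_swap Ω E p hc) d hd hdE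
      | arr ρ₁ ρ₂ ihρ₁ ihρ₂ =>
        intro x p hc u v huv
        have h := ihρ₂ x (p.snoc2 u v) (compatAll_snoc2 Ω E p u v hc huv)
        rw [Args2.snoc2_left, Args2.snoc2_right, applyArgs_snoc, applyArgs_snoc] at h
        exact h
    refine ⟨?_, hml⟩
    -- BProp
    cases σ with
    | base m =>
      cases m with
      | zero =>
        intro u v hc hash
        rcases hash with hdq | hdq
        · rcases hE.be _ _ hdq with ⟨h1, h2⟩ | ⟨h1, h2⟩
          · exact hc.1 ⟨h1, h2⟩
          · exact hc.2 ⟨h1, h2⟩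
        · rcases hE.be _ _ hdq with ⟨h1, h2⟩ | ⟨h1, h2⟩
          · exact hc.2 ⟨h2, h1⟩
          · exact hc.1 ⟨h2, h1⟩
      | succ α =>
        intro u v hc hash
        exact hc hash
    | arr σ₁ τ =>
      intro u v hc hash
      have hB : BProp Ω E τ := (ih τ (by simp [tySize] at hσ ⊢; omega)).1
      have hML : MLProp Ω E σ₁ := (ih σ₁ (by simp [tySize] at hσ ⊢; omega)).2
      have hvv : ∀ y : ℕ, compat Ω E σ₁ (Tm.var y σ₁) (Tm.var y σ₁) := by
        intro y
        have := hML σ₁ y Args2.nil trivial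
        exact this
      rcases hash with hdq | hdq
      · obtain ⟨x, hx⟩ := hE.fe _ _ hdq
        rw [Ω.n2, Ω.n2] at hx
        exact hB _ _ (hc _ _ (hvv x)) (Or.inl hx)
      · obtain ⟨x, hx⟩ := hE.fe _ _ hdq
        rw [Ω.n2, Ω.n2] at hx
        exact hB _ _ (hc _ _ (hvv x)) (Or.inr hx)

lemma compat_var (hE : Evident Ω E) (x : ℕ) (σ : Ty) :
    compat Ω E σ (Tm.var x σ) (Tm.var x σ) := by
  have := (BML hE (tySize σ) σ (le_refl _)).2 σ x Args2.nil trivial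
  exact this

lemma compat_hash (hE : Evident Ω E) {σ : Ty} {u v : Tm σ} (hc : compat Ω E σ u v) :
    ¬ hashE E (Ω.nf u) (Ω.nf v) :=
  (BML hE (tySize σ) σ (le_refl _)).1 u v hc

lemma compat_neg (hE : Evident Ω E) : compat Ω E (Ty.arr Ty.o Ty.o) Tm.neg Tm.neg := by
  intro u v huv
  constructor
  · rintro ⟨h1, h2⟩
    rw [show Tm.app Tm.neg u = Tm.Not u from rfl, nf_Not] at h1
    rw [show Tm.app Tm.neg v = Tm.Not v from rfl, nf_Not] at h2
    exact huv.2 ⟨h1, hE.dn _ h2⟩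
  · rintro ⟨h1, h2⟩
    rw [show Tm.app Tm.neg u = Tm.Not u from rfl, nf_Not] at h1
    rw [show Tm.app Tm.neg v = Tm.Not v from rfl, nf_Not] at h2
    exact huv.1 ⟨hE.dn _ h1, h2⟩

/-- The equality-head clash lemma. -/
lemma eq_clash (hE : Evident Ω E) : ∀ (σ : Ty) (s t u v : Tm σ),
    compat Ω E σ s t → compat Ω E σ u v →
    Tm.Eqn (Ω.nf s) (Ω.nf u) ∈ E → Tm.Diseq (Ω.nf t) (Ω.nf v) ∈ E → False := by
  intro σ
  induction σ with
  | base m =>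
    cases m with
    | zero =>
      intro s t u v hst huv he hd
      rcases hE.bq _ _ he with ⟨h1, h2⟩ | ⟨h1, h2⟩ <;>
        rcases hE.be _ _ hd with ⟨h3, h4⟩ | ⟨h3, h4⟩
      · exact huv.1 ⟨h2, h4⟩
      · exact hst.1 ⟨h1, h3⟩
      · exact hst.2 ⟨h1, h3⟩
      · exact huv.2 ⟨h2, h4⟩
    | succ α =>
      intro s t u v hst huv he hd
      rcases hE.con (Ω.nf s) (Ω.nf u) (Ω.nf t) (Ω.nf v) he hd with ⟨h1, h2⟩ | ⟨h1, h2⟩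
      · exact hst (Or.inl h1)
      · exact huv (Or.inl h2)
  | arr σ₁ τ ih₁ ih₂ =>
    intro s t u v hst huv he hd
    obtain ⟨x, hx⟩ := hE.fe _ _ hd
    rw [Ω.n2, Ω.n2] at hx
    have hu₀ := hE.fq _ _ he (Ω.nf (Tm.var x σ₁)) (Ω.n1 _)
    rw [Ω.n2, Ω.n2] at hu₀
    have hxx : compat Ω E σ₁ (Ω.nf (Tm.var x σ₁)) (Tm.var x σ₁) :=
      compat_congr_left Ω E σ₁ (Ω.n1 _).symm (compat_var hE x σ₁)
    exact ih₂ _ _ _ _ (hst _ _ hxx) (huv _ _ hxx) hu₀ hx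

lemma compat_eqhead (hE : Evident Ω E) (σ : Ty) :
    compat Ω E (Ty.arr σ (Ty.arr σ Ty.o)) (Tm.eq σ) (Tm.eq σ) := by
  intro s t hst u v huv
  constructor
  · rintro ⟨h1, h2⟩
    rw [show Tm.app (Tm.app (Tm.eq σ) s) u = Tm.Eqn s u from rfl, nf_Eqn] at h1
    rw [show Tm.app (Tm.app (Tm.eq σ) t) v = Tm.Eqn t v from rfl, nf_Eqn] at h2
    exact eq_clash hE σ s t u v hst huv h1 h2
  · rintro ⟨h1, h2⟩
    rw [show Tm.app (Tm.app (Tm.eq σ) s) u = Tm.Eqn s u from rfl, nf_Eqn] at h1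
    rw [show Tm.app (Tm.app (Tm.eq σ) t) v = Tm.Eqn t v from rfl, nf_Eqn] at h2
    exact eq_clash hE σ t s v u (compat_symm Ω E σ hst) (compat_symm Ω E σ huv) h2 h1

lemma compat_fundamental (hE : Evident Ω E) :
    ∀ {σ : Ty} (s : Tm σ) (θ θ' : ℕ → (σ : Ty) → Option (Tm σ)),
    (∀ (n : ℕ) (μ : Ty),
      compat Ω E μ ((θ n μ).getD (Tm.var n μ)) ((θ' n μ).getD (Tm.var n μ))) →
    compat Ω E σ (Ω.sub θ s) (Ω.sub θ' s)
  | _, .var n σ, θ, θ', hθ => by rw [Ω.s1, Ω.s1]; exact hθ n σ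
  | _, .neg, θ, θ', hθ => by rw [Ω.s1neg, Ω.s1neg]; exact compat_neg hE
  | _, .eq σ, θ, θ', hθ => by rw [Ω.s1eq, Ω.s1eq]; exact compat_eqhead hE σ
  | _, .app f a, θ, θ', hθ => by
      rw [Ω.s2, Ω.s2]
      exact compat_fundamental hE f θ θ' hθ _ _ (compat_fundamental hE a θ θ' hθ)
  | _, .lam x σ b, θ, θ', hθ => by
      intro u v huv
      refine compat_congr_left Ω E _ (Ω.s3 θ x σ b u).symm ?_
      refine compat_congr_right Ω E _ (Ω.s3 θ' x σ b v).symm ?_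
      refine compat_fundamental hE b _ _ (fun n μ => ?_)
      unfold updS
      split
      · rename_i hcond
        obtain ⟨rfl, rfl⟩ := hcond
        exact huv
      · exact hθ n μ

lemma compat_self (hE : Evident Ω E) {σ : Ty} (s : Tm σ) : compat Ω E σ s s := by
  have h := compat_fundamental hE s (fun _ _ => none) (fun _ _ => none)
    (fun n μ => compat_var hE n μ)
  exact compat_congr_left Ω E σ (Ω.s4 s) (compat_congr_right Ω E σ (Ω.s4 s) h)

/-- Consistency at `o`: no complementary pair of normal formulas. -/
lemma consistency_o (hE : Evident Ω E) {s : Tm Ty.o} (hs : Ω.nf s = s) :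
    ¬(s ∈ E ∧ Tm.Not s ∈ E) := by
  have h := (compat_self hE s).1
  rw [hs] at h
  exact h

lemma no_diseq_self_o (hE : Evident Ω E) {s : Tm Ty.o} (hs : Ω.nf s = s) :
    Tm.Diseq s s ∉ E := by
  intro h
  rcases hE.be s s h with ⟨h1, h2⟩ | ⟨h1, h2⟩
  · exact consistency_o hE hs ⟨h1, h2⟩
  · exact consistency_o hE hs ⟨h2, h1⟩

lemma no_diseq_self_sort (hE : Evident Ω E) {α : ℕ} {u : Tm (Ty.sort α)}
    (hu : Ω.nf u = u) : Tm.Diseq u u ∉ E := by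
  intro h
  have hc := compat_self hE u
  rw [compat_sort, hu] at hc
  exact hc (Or.inl h)

end Compat

section Values

variable {Ω : NormOp} {E : Set (Tm Ty.o)}

/-- Existence of discriminants extending a compatible set of discriminating terms. -/
lemma disc_exists (E : Set (Tm Ty.o)) (α : ℕ) (b₀ : Set (Tm (Ty.sort α)))
    (h₀ : ∀ u ∈ b₀, Discriminating E u)
    (hp : ∀ s ∈ b₀, ∀ t ∈ b₀, Tm.Diseq s t ∉ E) :
    ∃ a : Set (Tm (Ty.sort α)), IsDiscriminant E α a ∧ b₀ ⊆ a := by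
  set S : Set (Set (Tm (Ty.sort α))) :=
    {b | b₀ ⊆ b ∧ (∀ u ∈ b, Discriminating E u) ∧ ∀ s ∈ b, ∀ t ∈ b, Tm.Diseq s t ∉ E} with hS
  have hchainU : ∀ c ⊆ S, IsChain (· ⊆ ·) c → c.Nonempty → ∃ ub ∈ S, ∀ s ∈ c, s ⊆ ub := by
    intro c hcS hchain hcne
    refine ⟨⋃₀ c ∪ b₀, ⟨Set.subset_union_right, ?_, ?_⟩, ?_⟩
    · rintro u (⟨b, hb, hub⟩ | hub)
      · exact (hcS hb).2.1 u hub
      · exact h₀ u hub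
    · rintro s (⟨b₁, hb₁, hs⟩ | hs) t (⟨b₂, hb₂, ht⟩ | ht)
      · rcases hchain.total hb₁ hb₂ with h | h
        · exact (hcS hb₂).2.2 s (h hs) t ht
        · exact (hcS hb₁).2.2 s hs t (h ht)
      · exact (hcS hb₁).2.2 s hs t ((hcS hb₁).1 ht)
      · exact (hcS hb₂).2.2 s ((hcS hb₂).1 hs) t ht
      · exact hp s hs t ht
    · intro b hb
      exact (Set.subset_sUnion_of_mem hb).trans Set.subset_union_left
  obtain ⟨m, hm₀, hmS, hmax⟩ := zorn_subset_nonempty S hchainU b₀ ⟨subset_rfl, h₀, hp⟩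
  refine ⟨m, ⟨hmS.2.1, hmS.2.2, ?_⟩, hm₀⟩
  intro b hmb hbd hbp
  exact le_antisymm (hmax ⟨hm₀.trans hmb, hbd, hbp⟩ hmb) hmb

/-- Two discriminants through the two sides of an equation in `E` coincide. -/
lemma disc_eq_of_eqn (hE : Evident Ω E) {α : ℕ} {s t : Tm (Ty.sort α)}
    (he : Tm.Eqn s t ∈ E) {d d' : Set (Tm (Ty.sort α))}
    (hd : IsDiscriminant E α d) (hd' : IsDiscriminant E α d')
    (hs : s ∈ d) (ht : t ∈ d') : d = d' := by
  have cross : ∀ w ∈ d, ∀ w' ∈ d', Tm.Diseq w w' ∉ E ∧ Tm.Diseq w' w ∉ E := by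
    intro w hw w' hw'
    constructor
    · intro hdq
      rcases hE.con s t w w' he hdq with ⟨h1, h2⟩ | ⟨h1, h2⟩
      · exact hd.2.1 s hs w hw h1
      · exact hd'.2.1 t ht w' hw' h2
    · intro hdq
      rcases hE.con s t w' w he hdq with ⟨h1, h2⟩ | ⟨h1, h2⟩
      · exact hd'.2.1 t ht w' hw' h2
      · exact hd.2.1 s hs w hw h1
  have hu : ∀ u ∈ d ∪ d', Discriminating E u := by
    rintro u (hu | hu)
    · exact hd.1 u hu
    · exact hd'.1 u hu
  have hpw : ∀ a ∈ d ∪ d', ∀ b ∈ d ∪ d', Tm.Diseq a b ∉ E := by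
    rintro a (ha | ha) b (hb | hb)
    · exact hd.2.1 a ha b hb
    · exact (cross a ha b hb).1
    · exact (cross b hb a ha).2
    · exact hd'.2.1 a ha b hb
  have h1 := hd.2.2 (d ∪ d') Set.subset_union_left hu hpw
  have h2 := hd'.2.2 (d ∪ d') Set.subset_union_right hu hpw
  exact h1.symm.trans h2

/-- If an equation at a sort is in `E` and some disequation at that sort is in `E`,
both sides of the equation are discriminating. -/
lemma eqn_discriminating (hE : Evident Ω E) {α : ℕ} {s t u v : Tm (Ty.sort α)}
    (he : Tm.Eqn s t ∈ E) (hd : Tm.Diseq u v ∈ E) :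
    Discriminating E s ∧ Discriminating E t := by
  rcases hE.con s t u v he hd with ⟨h1, h2⟩ | ⟨h1, h2⟩
  · exact ⟨⟨u, Or.inl h1⟩, ⟨u, Or.inl h2⟩⟩
  · exact ⟨⟨v, Or.inl h1⟩, ⟨v, Or.inl h2⟩⟩

lemma disc_empty {α : ℕ} (hno : ¬∃ u v : Tm (Ty.sort α), Tm.Diseq u v ∈ E)
    {d : Set (Tm (Ty.sort α))} (hd : IsDiscriminant E α d) : d = ∅ := by
  rw [Set.eq_empty_iff_forall_notMem]
  intro u hu
  obtain ⟨t, ht | ht⟩ := hd.1 u hu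
  · exact hno ⟨u, t, ht⟩
  · exact hno ⟨t, u, ht⟩

/-- Abbreviations for the value system. -/
abbrev SD (Ω : NormOp) (E : Set (Tm Ty.o)) (σ : Ty) : Type := (sem Ω E σ).1

abbrev PV {σ : Ty} (Ω : NormOp) (E : Set (Tm Ty.o)) (s : Tm σ) (a : SD Ω E σ) : Prop :=
  (sem Ω E σ).2 s a

lemma pv_o {s : Tm Ty.o} {b : Bool} : PV Ω E s b ↔
    (if b then Tm.Not (Ω.nf s) ∉ E else Ω.nf s ∉ E) := Iff.rfl

lemma pv_sort {α : ℕ} {s : Tm (Ty.sort α)} {a : Set (Tm (Ty.sort α))} :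
    PV Ω E s a ↔ (IsDiscriminant E α a ∧ (Discriminating E (Ω.nf s) → Ω.nf s ∈ a)) := Iff.rfl

lemma pv_arr {σ τ : Ty} {s : Tm (Ty.arr σ τ)}
    {f : {x : SD Ω E σ // ∃ t : Tm σ, PV Ω E t x} → SD Ω E τ} :
    PV Ω E s f ↔ ∀ (t : Tm σ) (x : SD Ω E σ) (h : PV Ω E t x),
      PV Ω E (Tm.app s t) (f ⟨x, t, h⟩) := Iff.rfl

lemma pv_congr : ∀ (σ : Ty) {s s' : Tm σ}, Ω.nf s = Ω.nf s' → ∀ {a : SD Ω E σ},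
    PV Ω E s a → PV Ω E s' a := by
  intro σ
  induction σ with
  | base n =>
    cases n with
    | zero =>
      intro s s' he a h
      exact pv_o.2 (he ▸ pv_o.1 h)
    | succ α =>
      intro s s' he a h
      exact pv_sort.2 (he ▸ pv_sort.1 h)
  | arr σ τ ihσ ihτ =>
    intro s s' he f h t x hx
    exact ihτ (nf_app_congr Ω he t) (h t x hx)

/-- Mutual statements: shared possible values imply compatibility, and pairwise-compatible
families have common possible values. -/
def PVCProp (Ω : NormOp) (E : Set (Tm Ty.o)) (σ : Ty) : Prop :=
  ∀ (s t : Tm σ) (a : SD Ω E σ), PV Ω E s a → PV Ω E t a → compat Ω E σ s t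

def CVProp (Ω : NormOp) (E : Set (Tm Ty.o)) (σ : Ty) : Prop :=
  ∀ F : Set (Tm σ), (∀ s ∈ F, ∀ t ∈ F, compat Ω E σ s t) →
    ∃ a : SD Ω E σ, ∀ s ∈ F, PV Ω E s a

lemma pvc_cv (hE : Evident Ω E) : ∀ (n : ℕ) (σ : Ty), tySize σ ≤ n →
    PVCProp Ω E σ ∧ CVProp Ω E σ := by
  intro n
  induction n with
  | zero => intro σ h; exact absurd h (by have := tySize_pos σ; omega)
  | succ n ih =>
    intro σ hσ
    constructor
    · -- PVC
      cases σ with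
      | base m =>
        cases m with
        | zero =>
          intro s t a hs ht
          cases a with
          | true =>
            exact ⟨fun ⟨h1, h2⟩ => ht h2, fun ⟨h1, h2⟩ => hs h1⟩
          | false =>
            exact ⟨fun ⟨h1, h2⟩ => hs h1, fun ⟨h1, h2⟩ => ht h2⟩
        | succ α =>
          intro s t a hs ht hash
          rcases hash with hdq | hdq
          · have h1 := hs.2 ⟨Ω.nf t, Or.inl hdq⟩
            have h2 := ht.2 ⟨Ω.nf s, Or.inr hdq⟩
            exact hs.1.2.1 _ h1 _ h2 hdq
          · have h1 := hs.2 ⟨Ω.nf t, Or.inr hdq⟩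
            have h2 := ht.2 ⟨Ω.nf s, Or.inl hdq⟩
            exact hs.1.2.1 _ h2 _ h1 hdq
      | arr σ₁ τ =>
        intro s t f hs ht u v huv
        have hcv : CVProp Ω E σ₁ := (ih σ₁ (by simp [tySize] at hσ ⊢; omega)).2
        have hpvc : PVCProp Ω E τ := (ih τ (by simp [tySize] at hσ ⊢; omega)).1
        obtain ⟨x, hx⟩ := hcv {u, v} (by
          intro p hp q hq
          simp only [Set.mem_insert_iff, Set.mem_singleton_iff] at hp hq
          rcases hp with hp | hp <;> rcases hq with hq | hq <;> rw [hp, hq]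
          · exact compat_self hE u
          · exact huv
          · exact compat_symm Ω E σ₁ huv
          · exact compat_self hE v)
        have hu := hx u (Set.mem_insert _ _)
        have hv := hx v (Set.mem_insert_of_mem _ rfl)
        exact hpvc _ _ _ (hs u x hu) (ht v x hv)
    · -- CV
      cases σ with
      | base m =>
        cases m with
        | zero =>
          intro F hF
          classical
          by_cases h : ∀ s ∈ F, Tm.Not (Ω.nf s) ∉ E
          · exact ⟨true, fun s hs => h s hs⟩
          · push_neg at h
            obtain ⟨s₀, hs₀, hn₀⟩ := h
            refine ⟨false, fun s hs => ?_⟩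
            show Ω.nf s ∉ E
            intro hmem
            exact (hF s hs s₀ hs₀).1 ⟨hmem, hn₀⟩
        | succ α =>
          intro F hF
          have h1 : ∀ u ∈ {w : Tm (Ty.sort α) | ∃ s ∈ F, w = Ω.nf s ∧ Discriminating E w},
              Discriminating E u := by
            rintro u ⟨s, hs, rfl, hdisc⟩
            exact hdisc
          have h2 : ∀ w ∈ {w : Tm (Ty.sort α) | ∃ s ∈ F, w = Ω.nf s ∧ Discriminating E w},
              ∀ w' ∈ {w : Tm (Ty.sort α) | ∃ s ∈ F, w = Ω.nf s ∧ Discriminating E w},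
              Tm.Diseq w w' ∉ E := by
            rintro w ⟨s, hs, rfl, -⟩ w' ⟨s', hs', rfl, -⟩ hdq
            exact compat_hash hE (hF s hs s' hs') (Or.inl hdq)
          obtain ⟨a, ha, hsub⟩ := disc_exists E α _ h1 h2
          exact ⟨a, fun s hs => ⟨ha, fun hdisc => hsub ⟨s, hs, rfl, hdisc⟩⟩⟩
      | arr σ₁ τ =>
        intro F hF
        classical
        have hpvc : PVCProp Ω E σ₁ := (ih σ₁ (by simp [tySize] at hσ ⊢; omega)).1
        have hcv : CVProp Ω E τ := (ih τ (by simp [tySize] at hσ ⊢; omega)).2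
        have key : ∀ x : {x : SD Ω E σ₁ // ∃ t : Tm σ₁, PV Ω E t x},
            ∃ a : SD Ω E τ, ∀ w ∈ {w : Tm τ | ∃ s ∈ F, ∃ t : Tm σ₁,
              PV Ω E t x.1 ∧ w = Tm.app s t}, PV Ω E w a := by
          intro x
          refine hcv _ ?_
          rintro w ⟨s, hs, t, ht, rfl⟩ w' ⟨s', hs', t', ht', rfl⟩
          exact hF s hs s' hs' t t' (hpvc t t' x.1 ht ht')
        refine ⟨fun x => (key x).choose, ?_⟩
        intro s hs t x hx
        exact (key ⟨x, t, hx⟩).choose_spec (Tm.app s t) ⟨s, hs, t, hx, rfl⟩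

lemma pv_compat (hE : Evident Ω E) {σ : Ty} {s t : Tm σ} {a : SD Ω E σ}
    (hs : PV Ω E s a) (ht : PV Ω E t a) : compat Ω E σ s t :=
  (pvc_cv hE (tySize σ) σ (le_refl _)).1 s t a hs ht

lemma pv_exists (hE : Evident Ω E) {σ : Ty} (s : Tm σ) : ∃ a : SD Ω E σ, PV Ω E s a := by
  have hpair : ∀ u ∈ ({s} : Set (Tm σ)), ∀ v ∈ ({s} : Set (Tm σ)), compat Ω E σ u v := by
    intro u hu v hv
    rw [Set.mem_singleton_iff] at hu hv
    rw [hu, hv]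
    exact compat_self hE s
  obtain ⟨a, ha⟩ := (pvc_cv hE (tySize σ) σ (le_refl _)).2 {s} hpair
  exact ⟨a, ha s rfl⟩

/-- Values of `E`-equal terms are unique/equal; values of `E`-distinct terms differ. -/
lemma eq_unique (hE : Evident Ω E) : ∀ (σ : Ty) (s t : Tm σ) (a b : SD Ω E σ),
    PV Ω E s a → PV Ω E t b → Tm.Eqn (Ω.nf s) (Ω.nf t) ∈ E → a = b := by
  intro σ
  induction σ with
  | base m =>
    cases m with
    | zero =>
      intro s t a b hs ht he
      rcases hE.bq _ _ he with ⟨h1, h2⟩ | ⟨h1, h2⟩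
      · cases a with
        | false => exact absurd h1 hs
        | true =>
          cases b with
          | false => exact absurd h2 ht
          | true => rfl
      · cases a with
        | true => exact absurd h1 hs
        | false =>
          cases b with
          | true => exact absurd h2 ht
          | false => rfl
    | succ α =>
      intro s t a b hs ht he
      by_cases hex : ∃ u v : Tm (Ty.sort α), Tm.Diseq u v ∈ E
      · obtain ⟨u, v, huv⟩ := hex
        obtain ⟨hds, hdt⟩ := eqn_discriminating hE he huv
        exact disc_eq_of_eqn hE he hs.1 ht.1 (hs.2 hds) (ht.2 hdt)
      · rw [disc_empty hex hs.1, disc_empty hex ht.1]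
  | arr σ₁ τ ih₁ ih₂ =>
    intro s t a b hs ht he
    funext xp
    obtain ⟨x, t₀, ht₀⟩ := xp
    have hu₀ : PV Ω E (Ω.nf t₀) x := pv_congr σ₁ (Ω.n1 t₀).symm ht₀
    have ha := hs (Ω.nf t₀) x hu₀
    have hb := ht (Ω.nf t₀) x hu₀
    have he' := hE.fq _ _ he (Ω.nf t₀) (Ω.n1 t₀)
    rw [Ω.n2, Ω.n2] at he'
    exact ih₂ _ _ _ _ ha hb he'

lemma diseq_unique (hE : Evident Ω E) : ∀ (σ : Ty) (s t : Tm σ) (a b : SD Ω E σ),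
    PV Ω E s a → PV Ω E t b → Tm.Diseq (Ω.nf s) (Ω.nf t) ∈ E → a ≠ b := by
  intro σ
  induction σ with
  | base m =>
    cases m with
    | zero =>
      intro s t a b hs ht hd
      rcases hE.be _ _ hd with ⟨h1, h2⟩ | ⟨h1, h2⟩
      · cases a with
        | false => exact absurd h1 hs
        | true =>
          cases b with
          | true => exact absurd h2 ht
          | false => exact fun h => Bool.noConfusion h
      · cases a with
        | true => exact absurd h1 hs
        | false =>
          cases b with
          | false => exact absurd h2 ht
          | true => exact fun h => Bool.noConfusion h
    | succ α =>
      intro s t a b hs ht hd heq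
      subst heq
      have h1 := hs.2 ⟨Ω.nf t, Or.inl hd⟩
      have h2 := ht.2 ⟨Ω.nf s, Or.inr hd⟩
      exact hs.1.2.1 _ h1 _ h2 hd
  | arr σ₁ τ ih₁ ih₂ =>
    intro s t a b hs ht hd heq
    obtain ⟨x, hx⟩ := hE.fe _ _ hd
    rw [Ω.n2, Ω.n2] at hx
    obtain ⟨ξ, hξ⟩ := pv_exists hE (Tm.var x σ₁)
    have ha := hs (Tm.var x σ₁) ξ hξ
    have hb := ht (Tm.var x σ₁) ξ hξ
    exact ih₂ _ _ _ _ ha hb hx (by rw [heq])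

/-- Possible values for the logical constants. -/
def negF (Ω : NormOp) (E : Set (Tm Ty.o)) :
    {x : SD Ω E Ty.o // ∃ t : Tm Ty.o, PV Ω E t x} → SD Ω E Ty.o := fun xp => !xp.1

lemma pv_neg (hE : Evident Ω E) : PV Ω E Tm.neg (negF Ω E) := by
  intro t x hx
  cases x with
  | true =>
    show Ω.nf (Tm.Not t) ∉ E
    rw [nf_Not]
    intro hmem
    exact hx hmem
  | false =>
    show Tm.Not (Ω.nf (Tm.Not t)) ∉ E
    rw [nf_Not]
    intro hmem
    exact hx (hE.dn _ hmem)

open Classical in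
noncomputable def eqF (Ω : NormOp) (E : Set (Tm Ty.o)) (σ : Ty) :
    {x : SD Ω E σ // ∃ t : Tm σ, PV Ω E t x} → SD Ω E (Ty.arr σ Ty.o) :=
  fun xp yp => if xp.1 = yp.1 then true else false

lemma pv_eqF (hE : Evident Ω E) (σ : Ty) : PV Ω E (Tm.eq σ) (eqF Ω E σ) := by
  intro s x hx t y hy
  unfold eqF
  dsimp only
  by_cases hxy : x = y
  · erw [if_pos hxy]
    show Tm.Not (Ω.nf (Tm.Eqn s t)) ∉ E
    rw [nf_Eqn]
    intro hmem
    exact diseq_unique hE σ s t x y hx hy hmem hxy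
  · erw [if_neg hxy]
    show Ω.nf (Tm.Eqn s t) ∉ E
    rw [nf_Eqn]
    intro hmem
    exact hxy (eq_unique hE σ s t x y hx hy hmem)

end Values

section Model

variable {Ω : NormOp} {E : Set (Tm Ty.o)}

/-- The domains: realizable possible values. -/
def MD (Ω : NormOp) (E : Set (Tm Ty.o)) (σ : Ty) : Type :=
  {a : SD Ω E σ // ∃ t : Tm σ, PV Ω E t a}

lemma pv_true (hE : Evident Ω E) :
    PV Ω E (Tm.Eqn (Tm.var 0 Ty.o) (Tm.var 0 Ty.o)) true := by
  show Tm.Not (Ω.nf (Tm.Eqn (Tm.var 0 Ty.o) (Tm.var 0 Ty.o))) ∉ E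
  rw [nf_Eqn, nf_var_o]
  exact no_diseq_self_o hE (nf_var_o Ω 0)

lemma pv_false (hE : Evident Ω E) :
    PV Ω E (Tm.Diseq (Tm.var 0 Ty.o) (Tm.var 0 Ty.o)) false := by
  show Ω.nf (Tm.Diseq (Tm.var 0 Ty.o) (Tm.var 0 Ty.o)) ∉ E
  rw [nf_Diseq, nf_var_o]
  exact no_diseq_self_o hE (nf_var_o Ω 0)

/-- The logical structure built over an evident set. -/
noncomputable def mkStruc (hE : Evident Ω E) : Struc where
  D := MD Ω E
  ap {σ τ} f a := ⟨f.1 ⟨a.1, a.2⟩, by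
    obtain ⟨s, hs⟩ := f.2
    obtain ⟨t, ht⟩ := a.2
    exact ⟨Tm.app s t, hs t a.1 ht⟩⟩
  ext {σ τ} f g h := Subtype.ext (funext fun x => by
    have := congrArg Subtype.val (h ⟨x.1, x.2⟩)
    exact this)
  ne σ := ⟨⟨(pv_exists hE (Tm.var 0 σ)).choose, Tm.var 0 σ, (pv_exists hE (Tm.var 0 σ)).choose_spec⟩⟩
  I n σ := ⟨(pv_exists hE (Tm.var n σ)).choose, Tm.var n σ, (pv_exists hE (Tm.var n σ)).choose_spec⟩
  bo :=
    { toFun := fun a => a.1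
      invFun := fun b => ⟨b, by
        cases b with
        | true => exact ⟨_, pv_true hE⟩
        | false => exact ⟨_, pv_false hE⟩⟩
      left_inv := fun a => Subtype.ext rfl
      right_inv := fun b => rfl }
  negv := ⟨negF Ω E, Tm.neg, pv_neg hE⟩
  eqv σ := ⟨eqF Ω E σ, Tm.eq σ, pv_eqF hE σ⟩
  hneg b := Subtype.ext rfl
  heq {σ} a b := by
    constructor
    · intro h
      have hv := congrArg Subtype.val h
      by_cases hab : a.1 = b.1
      · exact Subtype.ext hab
      · exfalso
        have : eqF Ω E σ ⟨a.1, a.2⟩ ⟨b.1, b.2⟩ = true := hv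
        unfold eqF at this
        simp [hab] at this
    · rintro rfl
      refine Subtype.ext ?_
      show eqF Ω E σ ⟨a.1, a.2⟩ ⟨a.1, a.2⟩ = true
      unfold eqF
      exact if_pos rfl

/-- Assignment update on the raw domains. -/
def updDM (I : ℕ → ∀ σ, MD Ω E σ) (m : ℕ) (σ0 : Ty) (a : MD Ω E σ0) :
    ℕ → ∀ σ, MD Ω E σ := fun n σ =>
  if h : n = m ∧ σ = σ0 then (h.2.symm ▸ a) else I n σ

lemma updS_self (θ : ℕ → (σ : Ty) → Option (Tm σ)) (x : ℕ) (σ0 : Ty) (t : Tm σ0) :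
    updS θ x σ0 t x σ0 = some t := by
  unfold updS
  rw [dif_pos ⟨rfl, rfl⟩]

lemma updS_other (θ : ℕ → (σ : Ty) → Option (Tm σ)) (x : ℕ) (σ0 : Ty) (t : Tm σ0)
    {n : ℕ} {σ : Ty} (h : ¬(n = x ∧ σ = σ0)) : updS θ x σ0 t n σ = θ n σ := dif_neg h

lemma updDM_self (I : ℕ → ∀ σ, MD Ω E σ) (m : ℕ) (σ0 : Ty) (a : MD Ω E σ0) :
    updDM I m σ0 a m σ0 = a := by
  unfold updDM
  rw [dif_pos ⟨rfl, rfl⟩]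

lemma updDM_other (I : ℕ → ∀ σ, MD Ω E σ) (m : ℕ) (σ0 : Ty) (a : MD Ω E σ0)
    {n : ℕ} {σ : Ty} (h : ¬(n = m ∧ σ = σ0)) : updDM I m σ0 a n σ = I n σ := dif_neg h

/-- Compatibility of a substitution with an assignment. -/
def Compatθ (I : ℕ → ∀ σ, MD Ω E σ) (θ : ℕ → (σ : Ty) → Option (Tm σ)) : Prop :=
  ∀ (n : ℕ) (σ : Ty), PV Ω E ((θ n σ).getD (Tm.var n σ)) (I n σ).1

noncomputable def canθ (I : ℕ → ∀ σ, MD Ω E σ) : ℕ → (σ : Ty) → Option (Tm σ) :=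
  fun n σ => some (I n σ).2.choose

lemma canθ_compat (I : ℕ → ∀ σ, MD Ω E σ) : Compatθ I (canθ I) :=
  fun n σ => (I n σ).2.choose_spec

/-- Evaluation with bundled adequacy. -/
noncomputable def evalD (hE : Evident Ω E) :
    ∀ {σ : Ty} (s : Tm σ) (I : ℕ → ∀ σ, MD Ω E σ),
    {a : SD Ω E σ // ∀ θ, Compatθ I θ → PV Ω E (Ω.sub θ s) a}
  | _, .var n σ, I => ⟨(I n σ).1, fun θ hθ => by rw [Ω.s1]; exact hθ n σ⟩
  | _, .neg, I => ⟨negF Ω E, fun θ _ => by rw [Ω.s1neg]; exact pv_neg hE⟩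
  | _, .eq σ, I => ⟨eqF Ω E σ, fun θ _ => by rw [Ω.s1eq]; exact pv_eqF hE σ⟩
  | _, .app f u, I =>
      ⟨(evalD hE f I).1 ⟨(evalD hE u I).1, Ω.sub (canθ I) u,
          (evalD hE u I).2 _ (canθ_compat I)⟩,
       fun θ hθ => by
        rw [Ω.s2]
        exact (evalD hE f I).2 θ hθ (Ω.sub θ u) (evalD hE u I).1 ((evalD hE u I).2 θ hθ)⟩
  | _, .lam x σ b, I =>
      ⟨fun xp => (evalD hE b (updDM I x σ ⟨xp.1, xp.2⟩)).1,
       fun θ hθ => by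
        intro t y hy
        refine pv_congr _ (Ω.s3 θ x σ b t).symm ?_
        refine (evalD hE b (updDM I x σ ⟨y, t, hy⟩)).2 (updS θ x σ t) ?_
        intro n μ
        by_cases hc : n = x ∧ μ = σ
        · obtain ⟨rfl, rfl⟩ := hc
          rw [updS_self]; erw [updDM_self]
          exact hy
        · rw [updS_other _ _ _ _ hc]; erw [updDM_other _ _ _ _ hc]
          exact hθ n μ⟩

noncomputable def evalM (hE : Evident Ω E) {σ : Ty} (s : Tm σ)
    (I : ℕ → ∀ σ, MD Ω E σ) : MD Ω E σ :=
  ⟨(evalD hE s I).1, Ω.sub (canθ I) s, (evalD hE s I).2 _ (canθ_compat I)⟩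

lemma eval_evalM (hE : Evident Ω E) :
    ∀ {σ : Ty} (s : Tm σ) (I : ℕ → ∀ σ, MD Ω E σ),
    Eval (mkStruc hE) I σ s (evalM hE s I)
  | _, .var n σ, I => by
      have h : evalM hE (Tm.var n σ) I = I n σ := Subtype.ext rfl
      rw [h]
      exact Eval.var (M := mkStruc hE) I n σ
  | _, .neg, I => by
      have h : evalM hE Tm.neg I = (mkStruc hE).negv := Subtype.ext rfl
      rw [h]
      exact Eval.neg (M := mkStruc hE) I
  | _, .eq σ, I => by
      have h : evalM hE (Tm.eq σ) I = (mkStruc hE).eqv σ := Subtype.ext rfl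
      rw [h]
      exact Eval.eq (M := mkStruc hE) I σ
  | _, .app f u, I => by
      have hf := eval_evalM hE f I
      have hu := eval_evalM hE u I
      have h := Eval.app hf hu
      have hv : (mkStruc hE).ap (evalM hE f I) (evalM hE u I) = evalM hE (Tm.app f u) I :=
        Subtype.ext rfl
      rwa [hv] at h
  | _, .lam x σ b, I => by
      refine Eval.lam (M := mkStruc hE) x σ b (evalM hE (Tm.lam x σ b) I) (fun a => ?_)
      have h := eval_evalM hE b (updDM I x σ a)
      have hv : evalM hE b (updDM I x σ a)
          = (mkStruc hE).ap (evalM hE (Tm.lam x σ b) I) a := Subtype.ext rfl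
      rwa [hv] at h

noncomputable def mkInterp (hE : Evident Ω E) : Interp :=
  { toStruc := mkStruc hE
    total := fun σ s => ⟨evalM hE s (mkStruc hE).I, eval_evalM hE s _⟩ }

theorem model_exists (hE : Evident Ω E) (hN : ∀ s ∈ E, Ω.nf s = s) :
    ∃ M : Interp, Satisfies M E := by
  refine ⟨mkInterp hE, ?_⟩
  intro s hs
  have hpv : PV Ω E s ((evalD hE s (mkStruc hE).I).1) := by
    have h := (evalD hE s (mkStruc hE).I).2 (fun _ _ => none)
      (fun n σ => (pv_exists hE (Tm.var n σ)).choose_spec)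
    exact pv_congr Ty.o (Ω.s4 s) h
  have hb : (evalD hE s (mkStruc hE).I).1 = true := by
    cases hbv : (evalD hE s (mkStruc hE).I).1 with
    | true => rfl
    | false =>
      exfalso
      rw [hbv] at hpv
      have : Ω.nf s ∉ E := hpv
      rw [hN s hs] at this
      exact this hs
  have hveq : evalM hE s (mkStruc hE).I = (mkInterp hE).bo.symm true := Subtype.ext hb
  have h := eval_evalM hE s (mkStruc hE).I
  rwa [hveq] at h

end Model
/-- Completeness: the set of finite non-refutable branches is an abstract
consistency class, and consequently every unsatisfiable finite branch is refutable. -/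
theorem stmt15 (Ω : NormOp) :
    ACC Ω {A : Set (Tm Ty.o) | A.Finite ∧ (∀ s ∈ A, Ω.nf s = s) ∧ ¬ Refutable Ω A} ∧
    (∀ A : Set (Tm Ty.o), A.Finite → (∀ s ∈ A, Ω.nf s = s) →
      ¬ (∃ M : Interp, Satisfies M A) → Refutable Ω A) := by
  
  constructor
  · exact acc_gamma
  · intro A hfin hnorm hunsat
    by_contra href
    have hA : A ∈ Gamma Ω := ⟨hfin, hnorm, href⟩
    obtain ⟨E, hAE, hEnorm, hEvid⟩ := extension_lemma hA
    obtain ⟨M, hM⟩ := model_exists hEvid hEnorm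
    exact hunsat ⟨M, fun s hs => hM s (hAE hs)⟩
end

section
/- Soundness of the tableau calculus: every refutable branch is unsatisfiable. Equivalently, for every rule instance A / A₁, …, Aₙ of T, if A is satisfiable then some Aᵢ is satisfiable. -/
section Helpers

lemma eval_det' {M : Struc} : ∀ {I : ℕ → ∀ σ, M.D σ} {σ : Ty} {s : Tm σ} {a b : M.D σ},
    Eval M I σ s a → Eval M I σ s b → a = b := by
  intro I σ s a b h1
  induction h1 with
  | var I n σ => intro h2; cases h2; rfl
  | neg I => intro h2; cases h2; rfl
  | eq I σ => intro h2; cases h2; rfl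
  | app h1 h2 ih1 ih2 =>
    intro h3; cases h3 with
    | app h1' h2' => rw [ih1 h1', ih2 h2']
  | lam n σ s f h ih =>
    intro h2; cases h2 with
    | lam _ _ _ g h' =>
      apply M.ext; intro a; exact ih a (h' a)

lemma eval_coincide {M : Struc} : ∀ {I : ℕ → ∀ σ, M.D σ} {σ : Ty} {s : Tm σ} {a : M.D σ},
    Eval M I σ s a → ∀ I' : ℕ → ∀ σ, M.D σ, (∀ y μ, FreeIn y μ s → I y μ = I' y μ) →
    Eval M I' σ s a := by
  intro I σ s a h
  induction h with
  | var I n σ =>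
    intro I' hag
    have := hag n σ (by simp [FreeIn])
    rw [this]; exact Eval.var I' n σ
  | neg I => intro I' _; exact Eval.neg I'
  | eq I σ => intro I' _; exact Eval.eq I' σ
  | app h1 h2 ih1 ih2 =>
    intro I' hag
    exact Eval.app (ih1 I' (fun y μ h => hag y μ (Or.inl h)))
      (ih2 I' (fun y μ h => hag y μ (Or.inr h)))
  | lam n σ s f h ih =>
    intro I' hag
    refine Eval.lam n σ s f (fun a => ih a (updD M I' n σ a) ?_)
    intro y μ hf
    by_cases hc : y = n ∧ μ = σ
    · obtain ⟨rfl, rfl⟩ := hc; simp [updD]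
    · simp only [updD, dif_neg hc]
      exact hag y μ ⟨hc, hf⟩
lemma total_upd {M : Struc} {I : ℕ → ∀ σ, M.D σ}
    (htot : ∀ (σ : Ty) (s : Tm σ), ∃ a, Eval M I σ s a)
    (x : ℕ) (σ0 : Ty) (c : M.D σ0) :
    ∀ (σ : Ty) (s : Tm σ), ∃ a, Eval M (updD M I x σ0 c) σ s a := by
  intro σ s
  obtain ⟨f, hf⟩ := htot (Ty.arr σ0 σ) (Tm.lam x σ0 s)
  cases hf with
  | lam _ _ _ _ h => exact ⟨M.ap f c, h c⟩

/-- Changing only the assignment field of a structure does not affect evaluation. -/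
lemma eval_mk {M : Struc} (f : ℕ → ∀ σ, M.D σ) :
    ∀ {I : ℕ → ∀ σ, M.D σ} {σ : Ty} {s : Tm σ} {a : M.D σ},
    Eval M I σ s a → Eval { M with I := f } I σ s a := by
  intro I σ s a h
  induction h with
  | var I n σ => exact Eval.var (M := { M with I := f }) I n σ
  | neg I => exact Eval.neg (M := { M with I := f }) I
  | eq I σ => exact Eval.eq (M := { M with I := f }) I σ
  | app h1 h2 ih1 ih2 => exact Eval.app ih1 ih2
  | lam n σ s g h ih => exact Eval.lam (M := { M with I := f }) n σ s g ih

noncomputable def den (M : Interp) (σ : Ty) (s : Tm σ) : M.D σ := (M.total σ s).choose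

lemma den_spec (M : Interp) (σ : Ty) (s : Tm σ) :
    Eval M.toStruc M.I σ s (den M σ s) := (M.total σ s).choose_spec

lemma den_eq {M : Interp} {σ : Ty} {s : Tm σ} {a : M.D σ}
    (h : Eval M.toStruc M.I σ s a) : den M σ s = a := eval_det' (den_spec M σ s) h

lemma den_app (M : Interp) {σ τ : Ty} (s : Tm (Ty.arr σ τ)) (t : Tm σ) :
    den M τ (Tm.app s t) = M.ap (den M _ s) (den M _ t) :=
  den_eq (Eval.app (den_spec M _ s) (den_spec M _ t))

/-- Truth of a formula in an interpretation. -/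
def TrueIn (M : Interp) (s : Tm Ty.o) : Prop := Eval M.toStruc M.I Ty.o s (M.bo.symm true)

lemma trueIn_iff_den {M : Interp} {s : Tm Ty.o} : TrueIn M s ↔ den M Ty.o s = M.bo.symm true := by
  constructor
  · exact fun h => den_eq h
  · intro h; have := den_spec M Ty.o s; rwa [h] at this

lemma o_cases {M : Interp} (a : M.D Ty.o) : a = M.bo.symm true ∨ a = M.bo.symm false := by
  rcases Bool.eq_false_or_eq_true (M.bo a) with h | h
  · left; rw [← h, Equiv.symm_apply_apply]
  · right; rw [← h, Equiv.symm_apply_apply]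

lemma tt_ne_ff {M : Interp} : (M.bo.symm true : M.D Ty.o) ≠ M.bo.symm false := by
  intro h; simpa using M.bo.symm.injective h

lemma den_not (M : Interp) (s : Tm Ty.o) :
    den M Ty.o (Tm.Not s) = M.bo.symm (!(M.bo (den M Ty.o s))) := by
  have := Eval.app (Eval.neg M.I) (den_spec M Ty.o s)
  rw [M.hneg] at this
  exact den_eq this

lemma trueIn_not_iff {M : Interp} (s : Tm Ty.o) : TrueIn M (Tm.Not s) ↔ ¬ TrueIn M s := by
  rw [trueIn_iff_den, trueIn_iff_den, den_not]
  constructor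
  · intro h hs
    have := M.bo.symm.injective h
    rw [hs] at this; simp at this
  · intro h
    rcases o_cases (den M Ty.o s) with h1 | h1
    · exact absurd h1 h
    · rw [h1]; simp

lemma eqn_iff {M : Interp} {σ : Ty} (s t : Tm σ) :
    TrueIn M (Tm.Eqn s t) ↔ den M σ s = den M σ t := by
  have he : den M Ty.o (Tm.Eqn s t)
      = M.ap (M.ap (M.eqv σ) (den M σ s)) (den M σ t) :=
    den_eq (Eval.app (Eval.app (Eval.eq M.I σ) (den_spec M σ s)) (den_spec M σ t))
  rw [trueIn_iff_den, he, M.heq]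

lemma diseq_iff {M : Interp} {σ : Ty} (s t : Tm σ) :
    TrueIn M (Tm.Diseq s t) ↔ den M σ s ≠ den M σ t := by
  rw [Tm.Diseq, trueIn_not_iff, eqn_iff]

lemma satisfies_insert {M : Interp} {s : Tm Ty.o} {A : Set (Tm Ty.o)} :
    Satisfies M (insert s A) ↔ TrueIn M s ∧ Satisfies M A := by
  constructor
  · intro h; exact ⟨h s (Set.mem_insert s A), fun u hu => h u (Set.mem_insert_of_mem s hu)⟩
  · rintro ⟨h1, h2⟩ u hu
    rcases hu with rfl | hu
    · exact h1
    · exact h2 u hu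

lemma satisfies_trueIn {M : Interp} {s : Tm Ty.o} {A : Set (Tm Ty.o)}
    (h : Satisfies M A) (hs : s ∈ A) : TrueIn M s := h s hs

lemma args2_den {M : Interp} : ∀ {σ ρ : Ty} (p : Args2 σ ρ),
    (∀ d ∈ p.diseqs, ¬ TrueIn M d) →
    ∀ h1 h2 : Tm σ, den M σ h1 = den M σ h2 →
    den M ρ (applyArgs h1 p.left) = den M ρ (applyArgs h2 p.right) := by
  intro σ ρ p
  induction p with
  | nil => intro _ h1 h2 h; exact h
  | cons s t p ih =>
    intro hd h1 h2 h
    have hst : den M _ s = den M _ t := by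
      have := hd (Tm.Diseq s t) (by simp [Args2.diseqs])
      rw [diseq_iff] at this
      exact not_not.mp this
    have : den M _ (Tm.app h1 s) = den M _ (Tm.app h2 t) := by
      rw [den_app, den_app, h, hst]
    exact ih (fun d hdm => hd d (by simp [Args2.diseqs, hdm])) _ _ this

/-- Soundness: assuming N4 (normalization preserves evaluation in every
interpretation), every refutable branch is unsatisfiable. -/
theorem stmt16 (Ω : NormOp)
    (hN4 : ∀ (M : Struc) (I : ℕ → ∀ σ, M.D σ), (∀ (σ : Ty) (s : Tm σ), ∃ a, Eval M I σ s a) →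
      ∀ (σ : Ty) (s : Tm σ) (a : M.D σ), Eval M I σ s a ↔ Eval M I σ (Ω.nf s) a)
    (A : Set (Tm Ty.o)) (h : Refutable Ω A) :
    ¬ ∃ M : Interp, Satisfies M A := by
  have hnf : ∀ (M : Interp) (σ : Ty) (s : Tm σ), den M σ (Ω.nf s) = den M σ s := fun M σ s =>
    den_eq ((hN4 M.toStruc M.I M.total σ s (den M σ s)).mp (den_spec M σ s))
  have hnotof : ∀ (M : Interp) (w : Tm Ty.o), den M Ty.o w = M.bo.symm false →
      TrueIn M (Tm.Not w) := fun M w hw => (trueIn_not_iff w).mpr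
    (fun hh => tt_ne_ff ((trueIn_iff_den.mp hh).symm.trans hw))
  induction h with
  | closed hc =>
    rintro ⟨M, hM⟩
    rcases hc with ⟨x, h1, h2⟩ | ⟨α, x, h3⟩
    · exact (trueIn_not_iff _).mp (hM _ h2) (hM _ h1)
    · exact (diseq_iff _ _).mp (hM _ h3) rfl
  | dn hnc hmem hr ih =>
    rintro ⟨M, hM⟩
    have h1 : TrueIn M (Tm.Not (Tm.Not _)) := hM _ hmem
    rw [trueIn_not_iff, trueIn_not_iff] at h1
    exact ih ⟨M, satisfies_insert.mpr ⟨not_not.mp h1, hM⟩⟩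
  | bq s t hnc hmem hr1 hr2 ih1 ih2 =>
    rintro ⟨M, hM⟩
    have he : den M Ty.o s = den M Ty.o t := (eqn_iff s t).mp (hM _ hmem)
    rcases o_cases (den M Ty.o s) with hs | hs
    · exact ih1 ⟨M, satisfies_insert.mpr ⟨trueIn_iff_den.mpr hs,
        satisfies_insert.mpr ⟨trueIn_iff_den.mpr (he.symm.trans hs), hM⟩⟩⟩
    · exact ih2 ⟨M, satisfies_insert.mpr ⟨hnotof M s hs,
        satisfies_insert.mpr ⟨hnotof M t (he.symm.trans hs), hM⟩⟩⟩
  | be s t hnc hmem hr1 hr2 ih1 ih2 =>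
    rintro ⟨M, hM⟩
    have hd0 : den M Ty.o s ≠ den M Ty.o t := (diseq_iff s t).mp (hM _ hmem)
    rcases o_cases (den M Ty.o s) with hs | hs
    · have ht : den M Ty.o t = M.bo.symm false :=
        (o_cases _).resolve_left (fun h => hd0 (hs.trans h.symm))
      exact ih1 ⟨M, satisfies_insert.mpr ⟨trueIn_iff_den.mpr hs,
        satisfies_insert.mpr ⟨hnotof M t ht, hM⟩⟩⟩
    · have ht : den M Ty.o t = M.bo.symm true :=
        (o_cases _).resolve_right (fun h => hd0 (hs.trans h.symm))
      exact ih2 ⟨M, satisfies_insert.mpr ⟨hnotof M s hs,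
        satisfies_insert.mpr ⟨trueIn_iff_den.mpr ht, hM⟩⟩⟩
  | fq s t u hnc hmem hnfu hr ih =>
    rintro ⟨M, hM⟩
    have he := (eqn_iff s t).mp (hM _ hmem)
    refine ih ⟨M, satisfies_insert.mpr ⟨(eqn_iff _ _).mpr ?_, hM⟩⟩
    rw [hnf, hnf, den_app, den_app, he]
  | fe s t x hnc hmem hfresh hnew hr ih =>
    rintro ⟨M, hM⟩
    rename_i A' σ τ
    have hd0 : den M _ s ≠ den M _ t := (diseq_iff s t).mp (hM _ hmem)
    have hex : ∃ c : M.D σ, M.ap (den M _ s) c ≠ M.ap (den M _ t) c := by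
      by_contra hc; push_neg at hc; exact hd0 (M.ext _ _ hc)
    obtain ⟨c, hc⟩ := hex
    set I' : ℕ → ∀ μ, M.D μ := updD M.toStruc M.I x σ c with hI'
    let M' : Interp := { toStruc := { M.toStruc with I := I' },
                         total := fun σ' s' => by
                           obtain ⟨a, ha⟩ := total_upd M.total x σ c σ' s'
                           exact ⟨a, eval_mk I' ha⟩ }
    have hcoin : ∀ {σ'} (w : Tm σ'), ¬ FreeIn x σ w → ∀ a : M.D σ',
        Eval M.toStruc M.I σ' w a → Eval M'.toStruc M'.I σ' w a := by
      intro σ' w hw a haw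
      refine eval_mk I' (eval_coincide haw I' ?_)
      intro y μ hf
      have hne : ¬ (y = x ∧ μ = σ) := by
        rintro ⟨rfl, rfl⟩; exact hw hf
      simp [hI', updD, hne]
    have hMA : Satisfies M' A' := by
      intro u hu
      exact hcoin u (hfresh u hu) _ (hM u hu)
    have hst := hfresh _ hmem
    simp only [Tm.Diseq, Tm.Eqn, Tm.Not, FreeIn, false_or, not_or] at hst
    have hs' : den M' _ s = den M _ s := den_eq (M := M') (hcoin s hst.1 _ (den_spec M _ s))
    have ht' : den M' _ t = den M _ t := den_eq (M := M') (hcoin t hst.2 _ (den_spec M _ t))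
    have hx : den M' σ (Tm.var x σ) = c := by
      have : Eval M'.toStruc M'.I σ (Tm.var x σ) (I' x σ) := eval_mk I' (Eval.var I' x σ)
      have hxc : I' x σ = c := by simp [hI', updD]
      exact den_eq (M := M') (hxc ▸ this)
    refine ih ⟨M', satisfies_insert.mpr ⟨(diseq_iff _ _).mpr ?_, hMA⟩⟩
    rw [hnf M', hnf M', den_app, den_app, hs', ht', hx]
    exact hc
  | mat x p hnc h1 h2 hr ih =>
    rintro ⟨M, hM⟩
    have hex : ∃ d ∈ p.diseqs, TrueIn M d := by
      by_contra hcon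
      push_neg at hcon
      have heq := args2_den p hcon (Tm.var x _) (Tm.var x _) rfl
      have hl := trueIn_iff_den.mp (hM _ h1)
      exact (trueIn_not_iff _).mp (hM _ h2) (trueIn_iff_den.mpr (heq.symm.trans hl))
    obtain ⟨d, hd, htd⟩ := hex
    exact ih d hd ⟨M, satisfies_insert.mpr ⟨htd, hM⟩⟩
  | dec x p hnc h1 hr ih =>
    rintro ⟨M, hM⟩
    have hd0 := (diseq_iff _ _).mp (hM _ h1)
    have hex : ∃ d ∈ p.diseqs, TrueIn M d := by
      by_contra hcon
      push_neg at hcon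
      exact hd0 (args2_den p hcon (Tm.var x _) (Tm.var x _) rfl)
    obtain ⟨d, hd, htd⟩ := hex
    exact ih d hd ⟨M, satisfies_insert.mpr ⟨htd, hM⟩⟩
  | con s t u v hnc he hd hr1 hr2 ih1 ih2 =>
    rintro ⟨M, hM⟩
    have hst := (eqn_iff s t).mp (hM _ he)
    have huv := (diseq_iff u v).mp (hM _ hd)
    by_cases hsu : den M _ s = den M _ u
    · refine ih2 ⟨M, satisfies_insert.mpr ⟨(diseq_iff _ _).mpr ?_,
        satisfies_insert.mpr ⟨(diseq_iff _ _).mpr ?_, hM⟩⟩⟩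
      · rw [hsu]; exact huv
      · rw [← hst, hsu]; exact huv
    · exact ih1 ⟨M, satisfies_insert.mpr ⟨(diseq_iff _ _).mpr hsu,
        satisfies_insert.mpr ⟨(diseq_iff _ _).mpr (fun hh => hsu (hst.trans hh)), hM⟩⟩⟩
end Helpers
end
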